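/- arXiv:2308.11539 — 6 statements merged into one kernel-verified Lean document; each statement's English description precedes it below -/
import Mathlib

section
/- Let x, y > 0 be reals, d a positive integer, and r ≥ log(x)/log(y). Let Ψ_r(x,y,d) be the number of positive integers n ≤ x that can be written as a product of at most r primes (with multiplicity), each prime ≤ y and not dividing d. Then Ψ_r(x,y,d) ≥ binomial(π(y) − π(z) − ω_y(d) + ⌊log(x)/log(y)⌋, π(y) − π(z) − ω_y(d)), where z = x^{1/r}, π(t) is the prime counting function, and ω_y(d) is the number of distinct prime divisors of d that are ≤ y. -/
open Real Finset

private lemma card_filterMap_optionMap {α β : Type*} [DecidableEq α] (g : α → β)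
    (M : Multiset (Option α)) :
    (M.filterMap (Option.map g)).card + M.count none = Multiset.card M := by
  induction M using Multiset.induction with
  | empty => simp
  | cons o M ih =>
    cases o with
    | none =>
      rw [Multiset.filterMap_cons_none _ _ rfl, Multiset.count_cons_self,
        Multiset.card_cons]
      omega
    | some b =>
      rw [Multiset.filterMap_cons_some (Option.map g) (some b) M rfl,
        Multiset.card_cons, Multiset.card_cons,
        Multiset.count_cons_of_ne (by simp)]
      omega

private lemma count_filterMap_optionMap {α β : Type*} [DecidableEq α] [DecidableEq β]
    {g : α → β} (hg : Function.Injective g) (M : Multiset (Option α)) (a : α) :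
    (M.filterMap (Option.map g)).count (g a) = M.count (some a) := by
  induction M using Multiset.induction with
  | empty => simp
  | cons o M ih =>
    cases o with
    | none =>
      rw [Multiset.filterMap_cons_none _ _ rfl, Multiset.count_cons_of_ne (by simp)]
      exact ih
    | some b =>
      rw [Multiset.filterMap_cons_some (Option.map g) (some b) M rfl,
        Multiset.count_cons, Multiset.count_cons, ih]
      by_cases hba : a = b
      · simp [hba]
      · have h1 : ¬ g a = g b := fun h => hba (hg h)
        have h2 : ¬ (some a = some b) := by simpa using hba
        simp [h1, h2]

private lemma prime_multiset_prod_injective {M N : Multiset ℕ}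
    (hM : ∀ p ∈ M, Nat.Prime p) (hN : ∀ p ∈ N, Nat.Prime p)
    (h : M.prod = N.prod) : M = N := by
  have h2 := UniqueFactorizationMonoid.factors_unique
    (fun x hx => hM x hx) (fun x hx => hN x hx)
    (by rw [h] : Associated M.prod N.prod)
  exact Multiset.rel_eq.mp (h2.mono fun a _ b _ hab => associated_iff_eq.mp hab)

private lemma prod_cast_le_pow {y : ℝ} (hy : 0 ≤ y) (M : Multiset ℕ)
    (h : ∀ q ∈ M, (q : ℝ) ≤ y) : ((M.prod : ℕ) : ℝ) ≤ y ^ (Multiset.card M) := by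
  induction M using Multiset.induction with
  | empty => simp
  | cons a M ih =>
    rw [Multiset.prod_cons, Multiset.card_cons, Nat.cast_mul, pow_succ']
    exact mul_le_mul (h a (Multiset.mem_cons_self a M))
      (ih fun q hq => h q (Multiset.mem_cons_of_mem hq)) (by positivity) hy

/-- Lower bound on the number of `(y, r, d)`-smooth integers up to `x`.
`Ψ_r(x,y,d)` counts the positive integers `n ≤ x` which are products of at most
`r` primes (with multiplicity), each at most `y` and not dividing `d`.  With
`z = x^{1/r}`, `π` the prime counting function and `ω_y(d)` the number of
distinct prime divisors of `d` that are at most `y`, if `r ≥ log x / log y` then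
`Ψ_r(x,y,d) ≥ C(π(y) − π(z) − ω_y(d) + ⌊log x / log y⌋, π(y) − π(z) − ω_y(d))`. -/
theorem smooth_count_lower_bound (x y : ℝ) (hx : 1 ≤ x) (hy : 0 < y)
    (d : ℕ) (hd : 0 < d) (r : ℕ) (hr : Real.log x / Real.log y ≤ (r : ℝ)) :
    let z : ℝ := x ^ ((r : ℝ)⁻¹)
    let k : ℕ := Nat.primeCounting ⌊y⌋₊ - Nat.primeCounting ⌊z⌋₊ -
      (d.primeFactors.filter fun q : ℕ => ((q : ℝ) ≤ y)).card
    let m : ℕ := ⌊Real.log x / Real.log y⌋₊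
    (k + m).choose k ≤
      Nat.card {n : ℕ | 0 < n ∧ (n : ℝ) ≤ x ∧
        ∃ M : Multiset ℕ, M.prod = n ∧ M.card ≤ r ∧
          ∀ q ∈ M, q.Prime ∧ (q : ℝ) ≤ y ∧ ¬ q ∣ d} := by
  intro z k m
  classical
  set P : Set ℕ := {n : ℕ | 0 < n ∧ (n : ℝ) ≤ x ∧
      ∃ M : Multiset ℕ, M.prod = n ∧ M.card ≤ r ∧
        ∀ q ∈ M, q.Prime ∧ (q : ℝ) ≤ y ∧ ¬ q ∣ d} with hP
  -- the target set is finite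
  have hPfin : P.Finite := by
    refine Set.Finite.subset (Set.finite_Iic ⌊x⌋₊) ?_
    intro n hn
    exact Set.mem_Iic.mpr (Nat.le_floor hn.2.1)
  have : Finite ↥P := hPfin.to_subtype
  -- `m ≤ r`
  have hmr : m ≤ r := by
    have := Nat.floor_le_floor hr
    rwa [Nat.floor_natCast] at this
  -- the pool of primes
  set T : Finset ℕ := (range (⌊y⌋₊ + 1)).filter (fun p => p.Prime ∧ ⌊z⌋₊ < p) with hT
  set S : Finset ℕ := T.filter (fun p => ¬ p ∣ d) with hS
  have hkS : k ≤ S.card := by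
    have hπ : ∀ n : ℕ, Nat.primeCounting n = ((range (n + 1)).filter Nat.Prime).card := by
      intro n
      rw [Nat.primeCounting, Nat.primeCounting', Nat.count_eq_card_filter_range]
    have h1 : ((range (⌊y⌋₊ + 1)).filter Nat.Prime).card ≤
        ((range (⌊z⌋₊ + 1)).filter Nat.Prime).card + T.card := by
      refine le_trans (Finset.card_le_card ?_) (Finset.card_union_le _ _)
      intro p hp
      simp only [Finset.mem_filter, Finset.mem_range, Finset.mem_union, hT] at hp ⊢
      rcases le_or_gt (p : ℕ) ⌊z⌋₊ with h | h
      · exact Or.inl ⟨by omega, hp.2⟩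
      · exact Or.inr ⟨hp.1, hp.2, h⟩
    have h2 : (T.filter (fun p => p ∣ d)).card + S.card = T.card :=
      Finset.card_filter_add_card_filter_not _
    have h3 : (T.filter (fun p => p ∣ d)).card ≤
        (d.primeFactors.filter fun q : ℕ => ((q : ℝ) ≤ y)).card := by
      refine Finset.card_le_card ?_
      intro q hq
      simp only [Finset.mem_filter, Finset.mem_range, hT] at hq
      refine Finset.mem_filter.mpr ⟨Nat.mem_primeFactors.mpr ⟨hq.1.2.1, hq.2, hd.ne'⟩, ?_⟩
      calc (q : ℝ) ≤ (⌊y⌋₊ : ℝ) := by exact_mod_cast Nat.lt_succ_iff.mp hq.1.1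
        _ ≤ y := Nat.floor_le hy.le
    have hky := hπ ⌊y⌋₊
    have hkz := hπ ⌊z⌋₊
    simp only [k]
    omega
  obtain ⟨S', hS'sub, hS'card⟩ := Finset.exists_subset_card_eq hkS
  have hS'mem : ∀ p ∈ S', p.Prime ∧ (p : ℝ) ≤ y ∧ ¬ p ∣ d := by
    intro p hp
    have := hS'sub hp
    simp only [hS, hT, Finset.mem_filter, Finset.mem_range] at this
    refine ⟨this.1.2.1, ?_, this.2⟩
    calc (p : ℝ) ≤ (⌊y⌋₊ : ℝ) := by exact_mod_cast Nat.lt_succ_iff.mp this.1.1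
      _ ≤ y := Nat.floor_le hy.le
  -- the injection from multisets
  let F : Sym (Option {p : ℕ // p ∈ S'}) m → Multiset ℕ :=
    fun σ => (σ : Multiset (Option {p : ℕ // p ∈ S'})).filterMap (Option.map Subtype.val)
  have hFprime : ∀ σ : Sym (Option {p : ℕ // p ∈ S'}) m,
      ∀ q ∈ F σ, q.Prime ∧ (q : ℝ) ≤ y ∧ ¬ q ∣ d := by
    intro σ q hq
    obtain ⟨o, _, ho⟩ := (Multiset.mem_filterMap _ _).mp hq
    cases o with
    | none => simp at ho
    | some p =>
      simp only [Option.map_some, Option.some.injEq] at ho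
      exact ho ▸ hS'mem p.1 p.2
  have hFcard : ∀ σ : Sym (Option {p : ℕ // p ∈ S'}) m, (F σ).card ≤ m := by
    intro σ
    have h1 : (F σ).card +
        Multiset.count none (σ : Multiset (Option {p : ℕ // p ∈ S'})) =
        Multiset.card (σ : Multiset (Option {p : ℕ // p ∈ S'})) :=
      card_filterMap_optionMap _ _
    have hc : Multiset.card (σ : Multiset (Option {p : ℕ // p ∈ S'})) = m := σ.2
    omega
  have hmem : ∀ σ : Sym (Option {p : ℕ // p ∈ S'}) m, (F σ).prod ∈ P := by
    intro σ
    have hppos : 0 < (F σ).prod := by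
      rcases Nat.eq_zero_or_pos (F σ).prod with h0 | h
      · rw [Multiset.prod_eq_zero_iff] at h0
        exact absurd (hFprime σ 0 h0).1 (by norm_num)
      · exact h
    refine ⟨hppos, ?_, F σ, rfl, (hFcard σ).trans hmr, hFprime σ⟩
    -- prod ≤ x
    rcases Multiset.empty_or_exists_mem (F σ) with h0 | ⟨q, hq⟩
    · simp only [h0, Multiset.prod_zero, Nat.cast_one]
      exact hx
    · have hq2 : 2 ≤ q := (hFprime σ q hq).1.two_le
      have hqy : (q : ℝ) ≤ y := (hFprime σ q hq).2.1
      have h2y : (2 : ℝ) ≤ y := le_trans (by exact_mod_cast hq2) hqy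
      have h1y : (1 : ℝ) ≤ y := by linarith
      have hylog : 0 < Real.log y := Real.log_pos (by linarith)
      have hmle : (m : ℝ) * Real.log y ≤ Real.log x := by
        have h1 : (m : ℝ) ≤ Real.log x / Real.log y :=
          Nat.floor_le (div_nonneg (Real.log_nonneg hx) hylog.le)
        rwa [← le_div_iff₀ hylog]
      have hyx : y ^ m ≤ x := by
        have : y ^ m = Real.exp ((m : ℝ) * Real.log y) := by
          rw [← Real.exp_log hy, ← Real.exp_nat_mul, Real.log_exp]
        rw [this, ← Real.exp_log (lt_of_lt_of_le one_pos hx)]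
        exact Real.exp_le_exp.mpr hmle
      calc ((F σ).prod : ℝ) ≤ y ^ ((F σ).card) :=
            prod_cast_le_pow hy.le _ (fun q hq => (hFprime σ q hq).2.1)
        _ ≤ y ^ m := pow_le_pow_right₀ h1y (hFcard σ)
        _ ≤ x := hyx
  let g : Sym (Option {p : ℕ // p ∈ S'}) m → ↥P := fun σ => ⟨(F σ).prod, hmem σ⟩
  have hginj : Function.Injective g := by
    intro σ τ h
    have hprod : (F σ).prod = (F τ).prod := congrArg Subtype.val h
    have hFeq : F σ = F τ :=
      prime_multiset_prod_injective (fun p hp => (hFprime σ p hp).1)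
        (fun p hp => (hFprime τ p hp).1) hprod
    refine Sym.coe_injective (Multiset.ext.mpr fun o => ?_)
    cases o with
    | none =>
      have h1 : (F σ).card +
          Multiset.count none (σ : Multiset (Option {p : ℕ // p ∈ S'})) =
          Multiset.card (σ : Multiset (Option {p : ℕ // p ∈ S'})) :=
        card_filterMap_optionMap _ _
      have h2 : (F τ).card +
          Multiset.count none (τ : Multiset (Option {p : ℕ // p ∈ S'})) =
          Multiset.card (τ : Multiset (Option {p : ℕ // p ∈ S'})) :=
        card_filterMap_optionMap _ _
      have hcσ : Multiset.card (σ : Multiset (Option {p : ℕ // p ∈ S'})) = m := σ.2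
      have hcτ : Multiset.card (τ : Multiset (Option {p : ℕ // p ∈ S'})) = m := τ.2
      have hcard : (F σ).card = (F τ).card := by rw [hFeq]
      omega
    | some p =>
      have h1 : Multiset.count (p : ℕ) (F σ) =
          Multiset.count (some p) (σ : Multiset (Option {p : ℕ // p ∈ S'})) :=
        count_filterMap_optionMap Subtype.val_injective _ p
      have h2 : Multiset.count (p : ℕ) (F τ) =
          Multiset.count (some p) (τ : Multiset (Option {p : ℕ // p ∈ S'})) :=
        count_filterMap_optionMap Subtype.val_injective _ p
      rw [← h1, ← h2, hFeq]
  have hcardα : Fintype.card (Option {p : ℕ // p ∈ S'}) = k + 1 := by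
    rw [Fintype.card_option, Fintype.card_coe, hS'card]
  calc (k + m).choose k = (k + m).choose m := Nat.choose_symm_add
    _ = Nat.multichoose (k + 1) m := by rw [Nat.multichoose_eq]; congr 1; omega
    _ = Fintype.card (Sym (Option {p : ℕ // p ∈ S'}) m) := by
        rw [Sym.card_sym_eq_multichoose, hcardα]
    _ = Nat.card (Sym (Option {p : ℕ // p ∈ S'}) m) := (Nat.card_eq_fintype_card).symm
    _ ≤ Nat.card ↥P := Nat.card_le_card_of_injective g hginj
end

section
/- Let 𝔒 = ℤ[ω] be an imaginary quadratic order with discriminant Δ_𝔒 ∉ {−3, −4}, where ω has trace t ∈ {0,1} and norm n = N(ω) = (t² + |Δ_𝔒|)/4. Let θ = a + ω with a ∈ ℤ, |a| ≤ √n, and suppose N(θ) is not a perfect square. Then the only elements α ∈ 𝔒 with N(α) = N(θ) are α ∈ {θ, −θ, θ̄, −θ̄}, where θ̄ denotes the complex conjugate. -/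
/-- Let `𝔒 = ℤ[ω]` be an imaginary quadratic order of discriminant
`Δ_𝔒 ∉ {−3, −4}` (we write `Δ = |Δ_𝔒| = 4n − t²`), where `ω` has trace
`t ∈ {0,1}` and norm `n = N(ω)`, so that `N(b + cω) = b² − tbc + c²n`.
Let `θ = a + ω` with `a ∈ ℤ`, `|a| ≤ √n`, and suppose `N(θ) = a² − ta + n`
is not a perfect square.  Then the only elements `α = b + cω ∈ 𝔒` with
`N(α) = N(θ)` are `α ∈ {θ, −θ, θ̄, −θ̄}`, i.e.
`(b, c) ∈ {(a, 1), (t − a, 1), (−a, −1), (a − t, −1)}`. -/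
theorem norm_equal_only_conjugates (t n Δ a : ℤ)
    (ht : t = 0 ∨ t = 1) (hΔ : Δ = 4 * n - t ^ 2) (hΔpos : 0 < Δ)
    (hΔ3 : Δ ≠ 3) (hΔ4 : Δ ≠ 4)
    (ha : a ^ 2 ≤ n)
    (hns : ¬ ∃ m : ℤ, m ^ 2 = a ^ 2 - t * a + n) :
    ∀ b c : ℤ, b ^ 2 - t * b * c + c ^ 2 * n = a ^ 2 - t * a + n →
      (b = a ∧ c = 1) ∨ (b = t - a ∧ c = 1) ∨
      (b = -a ∧ c = -1) ∨ (b = a - t ∧ c = -1) := by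
  -- key inequality: (2a - t)^2 < 3Δ
  have haa : 0 ≤ a * (a + 1) := by
    rcases le_or_gt 0 a with h | h
    · positivity
    · have h1 : a + 1 ≤ 0 := by omega
      nlinarith
  have hkey : (2 * a - t) ^ 2 < 3 * Δ := by
    rcases ht with rfl | rfl
    · nlinarith
    · have hn2 : 2 ≤ n := by omega
      nlinarith
  intro b c h
  have h4 : (2 * b - t * c) ^ 2 + Δ * c ^ 2 = (2 * a - t) ^ 2 + Δ := by
    linear_combination 4 * h + (c ^ 2 - 1) * hΔ
  have hc3 : c ^ 2 ≤ 3 := by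
    by_contra hcon
    push_neg at hcon
    have h4le : 4 ≤ c ^ 2 := by linarith
    have := mul_le_mul_of_nonneg_left h4le hΔpos.le
    nlinarith [sq_nonneg (2 * b - t * c)]
  have hc1 : c ≤ 1 := by nlinarith [sq_nonneg (c - 1), sq_nonneg (c + 1)]
  have hc1' : -1 ≤ c := by nlinarith [sq_nonneg (c - 1), sq_nonneg (c + 1)]
  interval_cases c
  · -- c = -1 : (2b + t)^2 = (2a - t)^2
    have hf : (2 * b + t - (2 * a - t)) * (2 * b + t + (2 * a - t)) = 0 := by
      linear_combination h4
    rcases mul_eq_zero.mp hf with hf | hf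
    · right; right; right; constructor <;> omega
    · right; right; left; constructor <;> omega
  · -- c = 0 : contradiction
    exact absurd ⟨b, by linarith⟩ hns
  · -- c = 1 : (2b - t)^2 = (2a - t)^2
    have hf : (2 * b - t - (2 * a - t)) * (2 * b - t + (2 * a - t)) = 0 := by
      linear_combination h4
    rcases mul_eq_zero.mp hf with hf | hf
    · left; constructor <;> omega
    · right; left; constructor <;> omega
end

section
/- Let 𝒪 be a maximal order in the quaternion algebra B_{p,∞} ramified exactly at an odd prime p and infinity. Suppose j₁ : 𝔒₁ ↪ 𝒪 and j₂ : 𝔒₂ ↪ 𝒪 are two primitive (optimal) embeddings of orders 𝔒₁, 𝔒₂ in the same imaginary quadratic field K, with discriminants Δ₁ and Δ₂. If j₁(𝔒₁) ≠ j₂(𝔒₂), then Δ₁·Δ₂ ≥ p². -/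
open Quaternion

noncomputable section

variable {c₁ c₂ : ℚ}

/-- Reduced trace on a quaternion algebra over `ℚ`. -/
def trd (x : ℍ[ℚ, c₁, c₂]) : ℚ := 2 * x.re

/-- Reduced norm on a quaternion algebra over `ℚ`. -/
def nrd (x : ℍ[ℚ, c₁, c₂]) : ℚ := (x * star x).re

/-- `ℍ[ℚ, c₁, c₂]` is the quaternion algebra ramified exactly at `p` and `∞`. -/
def IsBpInfty (p : ℕ) [Fact p.Prime] (c₁ c₂ : ℚ) : Prop :=
  (∀ x : ℍ[ℝ, (c₁ : ℝ), (c₂ : ℝ)], x ≠ 0 → IsUnit x) ∧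
  (∀ x : ℍ[ℚ_[p], (c₁ : ℚ_[p]), (c₂ : ℚ_[p])], x ≠ 0 → IsUnit x) ∧
  ∀ (ℓ : ℕ) (hℓ : ℓ.Prime), ℓ ≠ p →
    ¬ (letI : Fact ℓ.Prime := ⟨hℓ⟩;
       ∀ x : ℍ[ℚ_[ℓ], (c₁ : ℚ_[ℓ]), (c₂ : ℚ_[ℓ])], x ≠ 0 → IsUnit x)

/-- An order in `ℍ[ℚ, c₁, c₂]`: a subring which is a full `ℤ`-lattice. -/
def IsOrder (O : Subring ℍ[ℚ, c₁, c₂]) : Prop :=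
  ∃ e : Module.Basis (Fin 4) ℚ ℍ[ℚ, c₁, c₂],
    ∀ x : ℍ[ℚ, c₁, c₂], x ∈ O ↔ ∃ c : Fin 4 → ℤ, x = ∑ i, (c i : ℚ) • e i

/-- A maximal order. -/
def IsMaximalOrder (O : Subring ℍ[ℚ, c₁, c₂]) : Prop :=
  IsOrder O ∧ ∀ O' : Subring ℍ[ℚ, c₁, c₂], IsOrder O' → O ≤ O' → O' = O

/-- `α ∈ O` defines a primitive (optimal) embedding of the quadratic order `ℤ[α]`:
no element of `O` lying in `ℚ[α]` is outside `ℤ[α]`. -/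
def IsPrimitiveEmbedding (O : Subring ℍ[ℚ, c₁, c₂]) (α : ℍ[ℚ, c₁, c₂]) : Prop :=
  α ∈ O ∧ ∀ β ∈ O, (∃ u v : ℚ, β = u • (1 : ℍ[ℚ, c₁, c₂]) + v • α) →
    ∃ u v : ℤ, β = (u : ℚ) • (1 : ℍ[ℚ, c₁, c₂]) + (v : ℚ) • α

end

/-! ### Auxiliary material for the proof of Kaneko's theorem -/

namespace KanekoAux

/-! #### Generic quaternion algebra identities -/

section Generic
variable {K : Type*} [Field K] {a b : K}

/-- Reduced norm, over a general field. -/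
def Nrd (x : ℍ[K,a,b]) : K := (x * star x).re

theorem Nrd_def (x : ℍ[K,a,b]) :
    Nrd x = x.re^2 - a*x.imI^2 - b*x.imJ^2 + a*b*x.imK^2 := by
  simp [Nrd, QuaternionAlgebra.re_mul]
  ring

theorem mul_star_self (x : ℍ[K,a,b]) : x * star x = ((Nrd x : K) : ℍ[K,a,b]) := by
  have : ((Nrd x : K) : ℍ[K,a,b]) = ⟨Nrd x, 0, 0, 0⟩ := rfl
  rw [this]
  ext <;>
    simp only [Nrd_def, QuaternionAlgebra.re_mul, QuaternionAlgebra.imI_mul,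
      QuaternionAlgebra.imJ_mul, QuaternionAlgebra.imK_mul, QuaternionAlgebra.re_star,
      QuaternionAlgebra.imI_star, QuaternionAlgebra.imJ_star, QuaternionAlgebra.imK_star] <;> ring

theorem Nrd_smul (q : K) (x : ℍ[K,a,b]) : Nrd (q • x) = q^2 * Nrd x := by
  simp only [Nrd_def, QuaternionAlgebra.re_smul, QuaternionAlgebra.imI_smul,
    QuaternionAlgebra.imJ_smul, QuaternionAlgebra.imK_smul, smul_eq_mul]
  ring

theorem Nrd_add (x y : ℍ[K,a,b]) :
    Nrd (x + y) = Nrd x + 2 * (x * star y).re + Nrd y := by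
  simp only [Nrd_def, QuaternionAlgebra.re_add, QuaternionAlgebra.imI_add,
    QuaternionAlgebra.imJ_add, QuaternionAlgebra.imK_add, QuaternionAlgebra.re_mul,
    QuaternionAlgebra.re_star, QuaternionAlgebra.imI_star, QuaternionAlgebra.imJ_star,
    QuaternionAlgebra.imK_star]
  ring

theorem Nrd_combo (p q : K) (x y : ℍ[K,a,b]) :
    Nrd (p • x + q • y) = p^2 * Nrd x + p * q * (2 * (x * star y).re) + q^2 * Nrd y := by
  rw [Nrd_add, Nrd_smul, Nrd_smul]
  have : (p • x) * star (q • y) = (p*q) • (x * star y) := by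
    rw [QuaternionAlgebra.star_smul, smul_mul_assoc, mul_smul_comm, smul_smul]
  rw [this]
  simp only [QuaternionAlgebra.re_smul, smul_eq_mul]
  ring

theorem mul_ne_zero_div (hdiv : ∀ x : ℍ[K,a,b], x ≠ 0 → IsUnit x)
    {x y : ℍ[K,a,b]} (hx : x ≠ 0) (h : x * y = 0) : y = 0 := by
  obtain ⟨u, hu⟩ := hdiv x hx
  calc y = (↑u⁻¹ * u) * y := by rw [Units.inv_mul]; exact (one_mul y).symm
  _ = ↑u⁻¹ * (x * y) := by rw [mul_assoc, hu]
  _ = 0 := by rw [h, mul_zero]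

theorem pure_sq_ne_sq (hdiv : ∀ x : ℍ[K,a,b], x ≠ 0 → IsUnit x)
    {x : ℍ[K,a,b]} (hx : x.re = 0) {k μ : K} (hk : x * x = ((k : K) : ℍ[K,a,b]))
    (hμ : μ^2 = k) (hμ0 : μ ≠ 0) : False := by
  have hfac : (x - ((μ:K) : ℍ[K,a,b])) * (x + ((μ:K) : ℍ[K,a,b])) = 0 := by
    have hcomm : ((μ:K) : ℍ[K,a,b]) * x = x * ((μ:K) : ℍ[K,a,b]) :=
      (QuaternionAlgebra.coe_commutes μ x)
    have : (x - ((μ:K) : ℍ[K,a,b])) * (x + ((μ:K) : ℍ[K,a,b]))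
        = x*x - ((μ:K) : ℍ[K,a,b]) * ((μ:K) : ℍ[K,a,b]) := by
      rw [sub_mul, mul_add, mul_add, hcomm]; abel
    rw [this, hk, ← QuaternionAlgebra.coe_mul, ← sq, hμ, sub_self]
  have h1 : x - ((μ:K) : ℍ[K,a,b]) ≠ 0 := by
    intro h
    have : (x - ((μ:K) : ℍ[K,a,b])).re = 0 := by rw [h]; rfl
    simp [QuaternionAlgebra.re_sub, hx] at this
    exact hμ0 this
  have h2 := mul_ne_zero_div hdiv h1 hfac
  have : (x + ((μ:K) : ℍ[K,a,b])).re = 0 := by rw [h2]; rfl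
  simp [QuaternionAlgebra.re_add, hx] at this
  exact hμ0 this

end Generic

/-! #### Positivity of the norm form for definite quaternion algebras -/

section Pos
variable {K : Type*} [Field K] [LinearOrder K] [IsStrictOrderedRing K] {a b : K}

theorem Nrd'_pos (ha : a < 0) (hb : b < 0) {x : ℍ[K,a,b]} (hx : x ≠ 0) :
    0 < x.re^2 - a*x.imI^2 - b*x.imJ^2 + a*b*x.imK^2 := by
  have h : ¬ (x.re = 0 ∧ x.imI = 0 ∧ x.imJ = 0 ∧ x.imK = 0) := by
    intro ⟨h1, h2, h3, h4⟩
    exact hx (by ext <;> simp [h1, h2, h3, h4])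
  have hab : 0 < a * b := mul_pos_of_neg_of_neg ha hb
  have k1 : 0 ≤ (-a) * x.imI^2 := mul_nonneg (by linarith) (sq_nonneg _)
  have k2 : 0 ≤ (-b) * x.imJ^2 := mul_nonneg (by linarith) (sq_nonneg _)
  have k3 : 0 ≤ (a*b) * x.imK^2 := mul_nonneg (le_of_lt hab) (sq_nonneg _)
  have hre := sq_nonneg x.re
  rcases not_and_or.mp h with h0 | h'
  · have : 0 < x.re^2 := by positivity
    nlinarith
  · rcases not_and_or.mp h' with h0 | h'
    · have : 0 < (-a) * x.imI^2 := mul_pos (by linarith) (by positivity)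
      nlinarith
    · rcases not_and_or.mp h' with h0 | h0
      · have : 0 < (-b) * x.imJ^2 := mul_pos (by linarith) (by positivity)
        nlinarith
      · have : 0 < (a*b) * x.imK^2 := mul_pos hab (by positivity)
        nlinarith
end Pos

/-! #### A square-root criterion in `ℚ_[p]` via Hensel's lemma -/

section Hensel
variable {p : ℕ} [Fact p.Prime]

theorem exists_sqrt_padic (hp2 : p ≠ 2) {k σ : ℤ} (hσ : ¬ (p:ℤ) ∣ σ)
    (hcong : (p:ℤ) ∣ (k - σ^2)) : ∃ μ : ℚ_[p], μ^2 = (k : ℚ_[p]) := by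
  set F : Polynomial ℤ_[p] := Polynomial.X^2 - Polynomial.C (k : ℤ_[p]) with hF
  set a : ℤ_[p] := (σ : ℤ_[p]) with ha
  have hevala : F.eval a = ((σ^2 - k : ℤ) : ℤ_[p]) := by
    simp only [hF, Polynomial.eval_sub, Polynomial.eval_pow, Polynomial.eval_X,
      Polynomial.eval_C, ha]
    push_cast; ring
  have hderiv : F.derivative.eval a = ((2*σ : ℤ) : ℤ_[p]) := by
    simp only [hF, Polynomial.derivative_sub, Polynomial.derivative_C,
      Polynomial.derivative_X_pow, Polynomial.eval_sub, Polynomial.eval_zero,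
      Polynomial.eval_mul, Polynomial.eval_pow, Polynomial.eval_X,
      Polynomial.eval_C, Polynomial.eval_natCast, sub_zero, ha]
    push_cast; ring
  have hnorm1 : ‖F.eval a‖ < 1 := by
    rw [hevala, PadicInt.norm_int_lt_one_iff_dvd]
    have h2 : (p:ℤ) ∣ -(k - σ^2) := dvd_neg.mpr hcong
    rwa [neg_sub] at h2
  have hder : ‖F.derivative.eval a‖ = 1 := by
    rw [hderiv]
    rcases lt_or_eq_of_le (PadicInt.norm_le_one ((2*σ : ℤ) : ℤ_[p])) with h | h
    · exfalso
      rw [PadicInt.norm_int_lt_one_iff_dvd] at h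
      rcases (Int.Prime.dvd_mul' (Fact.out : p.Prime) h) with h' | h'
      · have hp2' : p ∣ 2 := by exact_mod_cast h'
        exact hp2 ((Nat.prime_dvd_prime_iff_eq (Fact.out : p.Prime) Nat.prime_two).mp hp2')
      · exact hσ h'
    · exact h
  have hnorm : ‖F.eval a‖ < ‖F.derivative.eval a‖^2 := by
    rw [hder]; simpa using hnorm1
  obtain ⟨z, hz, -⟩ := hensels_lemma hnorm
  have hz2 : z^2 = (k : ℤ_[p]) := by
    have h0 : z^2 - (k : ℤ_[p]) = 0 := by
      simpa only [hF, Polynomial.eval_sub, Polynomial.eval_pow, Polynomial.eval_X,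
        Polynomial.eval_C, Polynomial.aeval_sub, Polynomial.aeval_X_pow, Polynomial.aeval_C,
        Algebra.algebraMap_self, RingHom.id_apply] using hz
    exact sub_eq_zero.mp h0
  exact ⟨(z : ℚ_[p]), by exact_mod_cast congrArg (fun t : ℤ_[p] => (t : ℚ_[p])) hz2⟩
end Hensel

/-! #### Nondegenerate binary quadratic forms over `ZMod p` represent `1` -/

section ZModRep
variable {p : ℕ} [Fact p.Prime]

theorem zmod_sum_quadratic (hodd : Odd p) (α β γ : ZMod p) (hα : α ≠ 0) (hβ : β ≠ 0) :
    ∃ u v : ZMod p, α * u^2 + β * v^2 = γ := by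
  have hcard : Fintype.card (ZMod p) % 2 = 1 := by
    rw [ZMod.card p]; exact Nat.odd_iff.mp hodd
  have hf : (Polynomial.C α * Polynomial.X^2 : Polynomial (ZMod p)).degree = 2 := by
    simpa using Polynomial.degree_C_mul_X_pow 2 hα
  have hg : (Polynomial.C β * Polynomial.X^2 + Polynomial.C (-γ) :
      Polynomial (ZMod p)).degree = 2 := by
    rw [Polynomial.degree_add_eq_left_of_degree_lt]
    · simpa using Polynomial.degree_C_mul_X_pow 2 hβ
    · apply lt_of_le_of_lt (Polynomial.degree_C_le)
      rw [show ((Polynomial.C β * Polynomial.X^2 : Polynomial (ZMod p)).degree) = 2 by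
        simpa using Polynomial.degree_C_mul_X_pow 2 hβ]
      norm_num
  obtain ⟨u, v, huv⟩ := FiniteField.exists_root_sum_quadratic hf hg hcard
  refine ⟨u, v, ?_⟩
  simp only [Polynomial.eval_add, Polynomial.eval_mul, Polynomial.eval_C,
    Polynomial.eval_pow, Polynomial.eval_X] at huv
  linear_combination huv

theorem zmod_rep_one_of_ne_zero (hodd : Odd p) (A B C : ZMod p) (hA : A ≠ 0)
    (hdisc : B^2 - 4*A*C ≠ 0) :
    ∃ x y : ZMod p, ¬(x = 0 ∧ y = 0) ∧ A*x^2 + B*x*y + C*y^2 = 1 := by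
  haveI : Fact (1 < p) := ⟨(Fact.out : p.Prime).one_lt⟩
  have h2 : (2 : ZMod p) ≠ 0 := by
    have : ((2:ℕ) : ZMod p) ≠ 0 := by
      rw [Ne, ZMod.natCast_eq_zero_iff]
      intro h
      have h2 := (Nat.prime_dvd_prime_iff_eq (Fact.out : p.Prime) Nat.prime_two).mp h
      rw [h2] at hodd
      exact absurd hodd (by decide)
    exact_mod_cast this
  have h4 : (4 : ZMod p) ≠ 0 := by
    have : (4 : ZMod p) = 2 * 2 := by norm_num
    rw [this]; exact mul_ne_zero h2 h2
  have hE : 4*A*C - B^2 ≠ 0 := fun h => hdisc (by linear_combination -h)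
  have hβ : (4*A*C - B^2) * (4*A)⁻¹ ≠ 0 :=
    mul_ne_zero hE (inv_ne_zero (mul_ne_zero h4 hA))
  obtain ⟨u, v, huv⟩ := zmod_sum_quadratic hodd A ((4*A*C - B^2) * (4*A)⁻¹) 1 hA hβ
  refine ⟨u - B*(2*A)⁻¹*v, v, ?_, ?_⟩
  · rintro ⟨hx, hy⟩
    rw [hy, mul_zero, sub_zero] at hx
    rw [hy, hx] at huv
    simp at huv
  · have h2A : (2*A) ≠ 0 := mul_ne_zero h2 hA
    have h4A : (4*A) ≠ 0 := mul_ne_zero h4 hA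
    rw [← huv]
    field_simp
    ring

theorem zmod_rep_one (hodd : Odd p) (A B C : ZMod p) (hdisc : B^2 - 4*A*C ≠ 0) :
    ∃ x y : ZMod p, ¬(x = 0 ∧ y = 0) ∧ A*x^2 + B*x*y + C*y^2 = 1 := by
  haveI : Fact (1 < p) := ⟨(Fact.out : p.Prime).one_lt⟩
  by_cases hA : A = 0
  · by_cases hC : C = 0
    · have hB : B ≠ 0 := by intro h; apply hdisc; rw [hA, h]; ring
      refine ⟨B⁻¹, 1, by simp, ?_⟩
      rw [hA, hC]
      field_simp
      ring
    · obtain ⟨x, y, hxy, h⟩ := zmod_rep_one_of_ne_zero hodd C B A hC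
        (by intro h; apply hdisc; linear_combination h)
      exact ⟨y, x, by tauto, by linear_combination h⟩
  · exact zmod_rep_one_of_ne_zero hodd A B C hA hdisc

end ZModRep

/-! #### The key local divisibility at the ramified prime `p` -/

section LocalDvd

theorem local_dvd {p : ℕ} [Fact p.Prime] (hodd : Odd p) {A B : ℚ_[p]}
    (hdiv : ∀ x : ℍ[ℚ_[p],A,B], x ≠ 0 → IsUnit x)
    (ξ η : ℍ[ℚ_[p],A,B]) (hξ : ξ.re = 0) (hη : η.re = 0)
    {P₁ P₂ S : ℤ} (h1 : Nrd ξ = ((P₁:ℤ) : ℚ_[p])) (h2 : Nrd η = ((P₂:ℤ) : ℚ_[p]))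
    (hS : 2*((ξ * star η).re) = ((S:ℤ) : ℚ_[p])) :
    (p:ℤ) ∣ 4*P₁*P₂ - S^2 := by
  have hp2 : p ≠ 2 := by rintro rfl; exact absurd hodd (by decide)
  by_contra hnd
  have hdisc : ((-S : ℤ) : ZMod p)^2 - 4*((-P₁ : ℤ):ZMod p)*((-P₂ : ℤ):ZMod p) ≠ 0 := by
    intro h
    apply hnd
    have : ((S^2 - 4*P₁*P₂ : ℤ) : ZMod p) = 0 := by push_cast at h ⊢; linear_combination h
    rw [ZMod.intCast_zmod_eq_zero_iff_dvd] at this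
    have h2 : (p:ℤ) ∣ -(S^2 - 4*P₁*P₂) := dvd_neg.mpr this
    rwa [show -(S^2 - 4*P₁*P₂) = 4*P₁*P₂ - S^2 by ring] at h2
  obtain ⟨x, y, hxy, hval⟩ := zmod_rep_one hodd _ _ _ hdisc
  set aZ : ℤ := (x.val : ℤ) with haZ
  set bZ : ℤ := (y.val : ℤ) with hbZ
  have hax : ((aZ : ℤ) : ZMod p) = x := by
    rw [haZ]; push_cast; exact ZMod.natCast_val x |>.trans (ZMod.cast_id _ _)
  have hbx : ((bZ : ℤ) : ZMod p) = y := by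
    rw [hbZ]; push_cast; exact ZMod.natCast_val y |>.trans (ZMod.cast_id _ _)
  set K0 : ℤ := -P₁*aZ^2 - S*aZ*bZ - P₂*bZ^2 with hK0
  have hK0mod : ((K0 - 1 : ℤ) : ZMod p) = 0 := by
    push_cast [hK0]
    rw [hax, hbx]
    push_cast at hval
    linear_combination hval
  have hK0dvd : (p:ℤ) ∣ K0 - 1 := by rwa [ZMod.intCast_zmod_eq_zero_iff_dvd] at hK0mod
  have hpK0 : ¬ (p:ℤ) ∣ K0 := by
    intro h
    have : (p:ℤ) ∣ 1 := by
      have := dvd_sub h hK0dvd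
      simpa using this
    have hp1 := Int.le_of_dvd one_pos this
    have := (Fact.out : p.Prime).two_le
    omega
  have hcong : (p:ℤ) ∣ (K0 - 1^2) := by simpa using hK0dvd
  have hone : ¬ (p:ℤ) ∣ (1:ℤ) := by
    intro h
    have h1 := Int.le_of_dvd one_pos h
    have h2 : (2:ℤ) ≤ (p:ℤ) := by exact_mod_cast (Fact.out : p.Prime).two_le
    omega
  obtain ⟨μ, hμ⟩ := exists_sqrt_padic hp2 (σ := 1) hone hcong
  set v : ℍ[ℚ_[p],A,B] := ((aZ:ℚ_[p])) • ξ + ((bZ:ℚ_[p])) • η with hv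
  have hvre : v.re = 0 := by
    rw [hv]; simp [QuaternionAlgebra.re_add, QuaternionAlgebra.re_smul, hξ, hη]
  have hvnrd : Nrd v = ((-K0 : ℤ) : ℚ_[p]) := by
    rw [hv, Nrd_combo, h1, h2, hS, hK0]
    push_cast
    ring
  have hvv : v * v = (((K0:ℤ) : ℚ_[p]) : ℍ[ℚ_[p],A,B]) := by
    have hstar : star v = -v := QuaternionAlgebra.star_eq_neg.mpr hvre
    have := mul_star_self v
    rw [hstar, hvnrd] at this
    have h2 : -(v * v) = (((-K0 : ℤ) : ℚ_[p]) : ℍ[ℚ_[p],A,B]) := by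
      rw [← this, mul_neg]
    have h3 : v * v = -(((-K0 : ℤ) : ℚ_[p]) : ℍ[ℚ_[p],A,B]) := by
      rw [← h2, neg_neg]
    rw [h3, show ((-K0 : ℤ) : ℚ_[p]) = -((K0 : ℤ) : ℚ_[p]) by push_cast; ring,
      QuaternionAlgebra.coe_neg, neg_neg]
  have hμ0 : μ ≠ 0 := by
    intro h
    rw [h] at hμ
    have : ((K0:ℤ) : ℚ_[p]) = 0 := by simpa using hμ.symm
    have : (K0 : ℤ) = 0 := by exact_mod_cast this
    exact hpK0 (this ▸ dvd_zero _)
  exact pure_sq_ne_sq hdiv hvre hvv hμ hμ0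

end LocalDvd

/-! #### Integrality of traces of elements of an order -/

section Trace
variable {c₁ c₂ : ℚ}

theorem basis_mem (e : Module.Basis (Fin 4) ℚ ℍ[ℚ,c₁,c₂]) (O : Subring ℍ[ℚ,c₁,c₂])
    (he : ∀ x, x ∈ O ↔ ∃ c : Fin 4 → ℤ, x = ∑ i, (c i : ℚ) • e i) (i : Fin 4) :
    e i ∈ O := by
  rw [he]
  refine ⟨fun j => if j = i then 1 else 0, ?_⟩
  rw [Finset.sum_eq_single i] <;> simp +contextual

theorem four_re_int (e : Module.Basis (Fin 4) ℚ ℍ[ℚ,c₁,c₂]) (O : Subring ℍ[ℚ,c₁,c₂])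
    (he : ∀ x, x ∈ O ↔ ∃ c : Fin 4 → ℤ, x = ∑ i, (c i : ℚ) • e i)
    {γ : ℍ[ℚ,c₁,c₂]} (hγ : γ ∈ O) : ∃ z : ℤ, 4 * γ.re = (z:ℚ) := by
  have hmul : ∀ i : Fin 4, γ * e i ∈ O := fun i => mul_mem hγ (basis_mem e O he i)
  choose c hc using fun i => (he (γ * e i)).mp (hmul i)
  set T : ℍ[ℚ,c₁,c₂] →ₗ[ℚ] ℍ[ℚ,c₁,c₂] := LinearMap.mulLeft ℚ γ with hT
  have htr1 : LinearMap.trace ℚ _ T = ∑ i, ((c i i : ℚ)) := by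
    rw [LinearMap.trace_eq_matrix_trace ℚ e T, Matrix.trace]
    congr 1
    funext i
    rw [Matrix.diag]
    rw [LinearMap.toMatrix_apply]
    have : T (e i) = ∑ j, (c i j : ℚ) • e j := by rw [hT]; exact hc i
    rw [this]
    simp [Module.Basis.repr_self, Finsupp.single_apply]
  have htr2 : LinearMap.trace ℚ _ T = 4 * γ.re := by
    rw [LinearMap.trace_eq_matrix_trace ℚ (QuaternionAlgebra.basisOneIJK c₁ 0 c₂) T,
      Matrix.trace]
    have hdiag : ∀ i : Fin 4,
        Matrix.diag (LinearMap.toMatrix (QuaternionAlgebra.basisOneIJK c₁ 0 c₂)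
          (QuaternionAlgebra.basisOneIJK c₁ 0 c₂) T) i
          = (QuaternionAlgebra.equivTuple c₁ 0 c₂
              (γ * (QuaternionAlgebra.linearEquivTuple c₁ 0 c₂).symm (Pi.single i 1))) i := by
      intro i
      rw [Matrix.diag, LinearMap.toMatrix_apply, QuaternionAlgebra.basisOneIJK,
        Module.Basis.ofEquivFun_repr_apply, Module.Basis.coe_ofEquivFun]
      rfl
    rw [Fin.sum_univ_four]
    rw [hdiag 0, hdiag 1, hdiag 2, hdiag 3]
    have e0 : (QuaternionAlgebra.linearEquivTuple c₁ 0 c₂).symm (Pi.single (0 : Fin 4) 1)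
        = (⟨1,0,0,0⟩ : ℍ[ℚ,c₁,c₂]) := by
      rw [QuaternionAlgebra.coe_linearEquivTuple_symm]; rfl
    have e1 : (QuaternionAlgebra.linearEquivTuple c₁ 0 c₂).symm (Pi.single (1 : Fin 4) 1)
        = (⟨0,1,0,0⟩ : ℍ[ℚ,c₁,c₂]) := by
      rw [QuaternionAlgebra.coe_linearEquivTuple_symm]; rfl
    have e2 : (QuaternionAlgebra.linearEquivTuple c₁ 0 c₂).symm (Pi.single (2 : Fin 4) 1)
        = (⟨0,0,1,0⟩ : ℍ[ℚ,c₁,c₂]) := by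
      rw [QuaternionAlgebra.coe_linearEquivTuple_symm]; rfl
    have e3 : (QuaternionAlgebra.linearEquivTuple c₁ 0 c₂).symm (Pi.single (3 : Fin 4) 1)
        = (⟨0,0,0,1⟩ : ℍ[ℚ,c₁,c₂]) := by
      rw [QuaternionAlgebra.coe_linearEquivTuple_symm]; rfl
    rw [e0, e1, e2, e3]
    simp only [QuaternionAlgebra.equivTuple_apply, QuaternionAlgebra.re_mul,
      QuaternionAlgebra.imI_mul, QuaternionAlgebra.imJ_mul, QuaternionAlgebra.imK_mul]
    norm_num
    simp only [Matrix.cons_val_two, Matrix.cons_val_three, Matrix.tail_cons, Matrix.head_cons]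
    ring
  refine ⟨∑ i, c i i, ?_⟩
  rw [← htr2, htr1]
  push_cast
  ring

theorem trd_int (e : Module.Basis (Fin 4) ℚ ℍ[ℚ,c₁,c₂]) (O : Subring ℍ[ℚ,c₁,c₂])
    (he : ∀ x, x ∈ O ↔ ∃ c : Fin 4 → ℤ, x = ∑ i, (c i : ℚ) • e i)
    {γ : ℍ[ℚ,c₁,c₂]} (hγ : γ ∈ O) : ∃ t : ℤ, 2 * γ.re = (t:ℚ) := by
  obtain ⟨z1, h1⟩ := four_re_int e O he hγ
  obtain ⟨z2, h2⟩ := four_re_int e O he (mul_mem hγ hγ)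
  obtain ⟨z3, h3⟩ := four_re_int e O he (mul_mem (mul_mem hγ hγ) hγ)
  set n : ℚ := γ.re^2 - c₁*γ.imI^2 - c₂*γ.imJ^2 + c₁*c₂*γ.imK^2 with hn
  have hsq : (γ*γ).re = 2*γ.re^2 - n := by
    simp only [hn, QuaternionAlgebra.re_mul]; ring
  have hcube : (γ*γ*γ).re = 4*γ.re^3 - 3*γ.re*n := by
    simp only [hn, QuaternionAlgebra.re_mul, QuaternionAlgebra.imI_mul,
      QuaternionAlgebra.imJ_mul, QuaternionAlgebra.imK_mul]
    ring
  rw [hsq] at h2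
  rw [hcube] at h3
  have hr : γ.re = (z1:ℚ)/4 := by linarith
  rw [hr] at h2 h3
  have hnval : n = (z1:ℚ)^2/8 - (z2:ℚ)/4 := by
    field_simp at h2 ⊢
    linarith
  rw [hnval] at h3
  have key : (z1:ℚ)^3 = 2*(3*(z1:ℚ)*(z2:ℚ) - 4*(z3:ℚ)) := by
    field_simp at h3
    linarith
  have keyZ : z1^3 = 2*(3*z1*z2 - 4*z3) := by exact_mod_cast key
  have heven : Even z1 := by
    have h8 : Even (z1^3) := ⟨3*z1*z2 - 4*z3, by linarith⟩
    exact (Int.even_pow.mp h8).1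
  obtain ⟨u, hu⟩ := heven
  refine ⟨u, ?_⟩
  have hcast : (z1:ℚ) = (u:ℚ) + (u:ℚ) := by exact_mod_cast hu
  linarith

end Trace

end KanekoAux

set_option maxHeartbeats 1600000

/-- **Kaneko's theorem.** Let `𝒪` be a maximal order in the quaternion algebra
`B_{p,∞}` ramified exactly at an odd prime `p` and `∞`.  If `α₁, α₂ ∈ 𝒪` define
two primitive embeddings of orders (of discriminants `Δ₁, Δ₂`) in the same
imaginary quadratic field, with distinct images `ℤ[α₁] ≠ ℤ[α₂]`, then `Δ₁·Δ₂ ≥ p²`. -/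
theorem kaneko_disc_ineq (p : ℕ) [Fact p.Prime] (hodd : Odd p) (c₁ c₂ : ℚ)
    (hB : IsBpInfty p c₁ c₂)
    (O : Subring ℍ[ℚ, c₁, c₂]) (hO : IsMaximalOrder O)
    (α₁ α₂ : ℍ[ℚ, c₁, c₂]) (t₁ n₁ t₂ n₂ : ℤ)
    (ht₁ : trd α₁ = (t₁ : ℚ)) (hn₁ : nrd α₁ = (n₁ : ℚ))
    (ht₂ : trd α₂ = (t₂ : ℚ)) (hn₂ : nrd α₂ = (n₂ : ℚ))
    (Δ₁ Δ₂ : ℤ) (hΔ₁ : Δ₁ = t₁ ^ 2 - 4 * n₁) (hΔ₂ : Δ₂ = t₂ ^ 2 - 4 * n₂)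
    (hneg₁ : Δ₁ < 0) (hneg₂ : Δ₂ < 0)
    -- the two quadratic orders lie in the same imaginary quadratic field
    (hsame : ∃ m : ℤ, Δ₁ * Δ₂ = m ^ 2)
    (hprim₁ : IsPrimitiveEmbedding O α₁) (hprim₂ : IsPrimitiveEmbedding O α₂)
    -- the images `j₁(𝔒₁)` and `j₂(𝔒₂)` are distinct
    (hne : ¬ ∀ x : ℍ[ℚ, c₁, c₂],
        (∃ u v : ℤ, x = (u : ℚ) • (1 : ℍ[ℚ, c₁, c₂]) + (v : ℚ) • α₁) ↔
        (∃ u v : ℤ, x = (u : ℚ) • (1 : ℍ[ℚ, c₁, c₂]) + (v : ℚ) • α₂)) :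
    (p : ℤ) ^ 2 ≤ Δ₁ * Δ₂ := by
  classical
  obtain ⟨hdivR, hdivP, -⟩ := hB
  obtain ⟨e, he⟩ := hO.1
  have hp : p.Prime := Fact.out
  -- `c₁` and `c₂` are negative
  have hc₁ : c₁ < 0 := by
    by_contra hcon
    push_neg at hcon
    obtain ⟨r, hr⟩ : ∃ r : ℝ, r^2 = ((c₁ : ℝ)) :=
      ⟨Real.sqrt (c₁ : ℝ), Real.sq_sqrt (by exact_mod_cast hcon)⟩
    have hxy : (⟨-r,1,0,0⟩ : ℍ[ℝ,(c₁:ℝ),(c₂:ℝ)]) * ⟨r,1,0,0⟩ = 0 := by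
      ext <;> simp <;> nlinarith [hr]
    have hx0 : (⟨-r,1,0,0⟩ : ℍ[ℝ,(c₁:ℝ),(c₂:ℝ)]) ≠ 0 := by
      intro h
      have h2 := congrArg QuaternionAlgebra.imI h
      simp at h2
    have h0 := KanekoAux.mul_ne_zero_div hdivR hx0 hxy
    have h2 := congrArg QuaternionAlgebra.imI h0
    simp at h2
  have hc₂ : c₂ < 0 := by
    by_contra hcon
    push_neg at hcon
    obtain ⟨r, hr⟩ : ∃ r : ℝ, r^2 = ((c₂ : ℝ)) :=
      ⟨Real.sqrt (c₂ : ℝ), Real.sq_sqrt (by exact_mod_cast hcon)⟩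
    have hxy : (⟨-r,0,1,0⟩ : ℍ[ℝ,(c₁:ℝ),(c₂:ℝ)]) * ⟨r,0,1,0⟩ = 0 := by
      ext <;> simp <;> nlinarith [hr]
    have hx0 : (⟨-r,0,1,0⟩ : ℍ[ℝ,(c₁:ℝ),(c₂:ℝ)]) ≠ 0 := by
      intro h
      have h2 := congrArg QuaternionAlgebra.imJ h
      simp at h2
    have h0 := KanekoAux.mul_ne_zero_div hdivR hx0 hxy
    have h2 := congrArg QuaternionAlgebra.imJ h0
    simp at h2
  -- basic component facts
  have ha1 : α₁.re = (t₁:ℚ)/2 := by unfold trd at ht₁; linarith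
  have hb1 : α₂.re = (t₂:ℚ)/2 := by unfold trd at ht₂; linarith
  have hnα₁ : α₁.re^2 - c₁*α₁.imI^2 - c₂*α₁.imJ^2 + c₁*c₂*α₁.imK^2 = (n₁:ℚ) := by
    rw [← KanekoAux.Nrd_def]; exact hn₁
  have hnα₂ : α₂.re^2 - c₁*α₂.imI^2 - c₂*α₂.imJ^2 + c₁*c₂*α₂.imK^2 = (n₂:ℚ) := by
    rw [← KanekoAux.Nrd_def]; exact hn₂
  set ξ₁ : ℍ[ℚ,c₁,c₂] := (2:ℚ) • α₁ - (((t₁:ℚ)) : ℍ[ℚ,c₁,c₂]) with hxi1def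
  set ξ₂ : ℍ[ℚ,c₁,c₂] := (2:ℚ) • α₂ - (((t₂:ℚ)) : ℍ[ℚ,c₁,c₂]) with hxi2def
  have hx1re : ξ₁.re = 0 := by rw [hxi1def]; simp [ha1]; ring
  have hx2re : ξ₂.re = 0 := by rw [hxi2def]; simp [hb1]; ring
  have hx1I : ξ₁.imI = 2*α₁.imI := by rw [hxi1def]; simp
  have hx1J : ξ₁.imJ = 2*α₁.imJ := by rw [hxi1def]; simp
  have hx1K : ξ₁.imK = 2*α₁.imK := by rw [hxi1def]; simp
  have hx2I : ξ₂.imI = 2*α₂.imI := by rw [hxi2def]; simp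
  have hx2J : ξ₂.imJ = 2*α₂.imJ := by rw [hxi2def]; simp
  have hx2K : ξ₂.imK = 2*α₂.imK := by rw [hxi2def]; simp
  have hNξ₁ : KanekoAux.Nrd ξ₁ = ((-Δ₁ : ℤ) : ℚ) := by
    rw [KanekoAux.Nrd_def, hx1re, hx1I, hx1J, hx1K]
    push_cast [hΔ₁]
    linear_combination 4*hnα₁ - (4*α₁.re + 2*(t₁:ℚ))*ha1
  have hNξ₂ : KanekoAux.Nrd ξ₂ = ((-Δ₂ : ℤ) : ℚ) := by
    rw [KanekoAux.Nrd_def, hx2re, hx2I, hx2J, hx2K]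
    push_cast [hΔ₂]
    linear_combination 4*hnα₂ - (4*α₂.re + 2*(t₂:ℚ))*hb1
  -- the half-integral trace `σZ`
  have hγ0mem : α₁ * (((t₂ : ℤ) : ℍ[ℚ,c₁,c₂]) - α₂) ∈ O :=
    mul_mem hprim₁.1 (sub_mem (intCast_mem O t₂) hprim₂.1)
  obtain ⟨ρ, hρ⟩ := KanekoAux.trd_int e O he hγ0mem
  set σZ : ℤ := 2*ρ - t₁*t₂ with hσZdef
  have hSval : 2 * (ξ₁ * star ξ₂).re = ((2*σZ : ℤ) : ℚ) := by
    simp only [QuaternionAlgebra.re_mul, QuaternionAlgebra.re_star,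
      QuaternionAlgebra.imI_star, QuaternionAlgebra.imJ_star, QuaternionAlgebra.imK_star,
      QuaternionAlgebra.re_sub, QuaternionAlgebra.imI_sub, QuaternionAlgebra.imJ_sub,
      QuaternionAlgebra.imK_sub, QuaternionAlgebra.re_intCast, QuaternionAlgebra.imI_intCast,
      QuaternionAlgebra.imJ_intCast, QuaternionAlgebra.imK_intCast] at hρ ⊢
    rw [hx1re, hx2re, hx1I, hx1J, hx1K, hx2I, hx2J, hx2K]
    simp only [hσZdef]
    push_cast
    simp only [ha1, hb1] at hρ ⊢
    linear_combination 4*hρ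
  -- transfer to `ℚ_[p]` and the key divisibility
  have hdvdZ : (p:ℤ) ∣ Δ₁*Δ₂ - σZ^2 := by
    have hpdvd := KanekoAux.local_dvd hodd hdivP
      (⟨(ξ₁.re : ℚ_[p]), (ξ₁.imI : ℚ_[p]), (ξ₁.imJ : ℚ_[p]), (ξ₁.imK : ℚ_[p])⟩ :
        ℍ[ℚ_[p],(c₁:ℚ_[p]),(c₂:ℚ_[p])])
      (⟨(ξ₂.re : ℚ_[p]), (ξ₂.imI : ℚ_[p]), (ξ₂.imJ : ℚ_[p]), (ξ₂.imK : ℚ_[p])⟩ :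
        ℍ[ℚ_[p],(c₁:ℚ_[p]),(c₂:ℚ_[p])])
      (by rw [show (⟨(ξ₁.re : ℚ_[p]), (ξ₁.imI : ℚ_[p]), (ξ₁.imJ : ℚ_[p]), (ξ₁.imK : ℚ_[p])⟩ :
            ℍ[ℚ_[p],(c₁:ℚ_[p]),(c₂:ℚ_[p])]).re = ((ξ₁.re : ℚ) : ℚ_[p]) from rfl, hx1re]
          exact Rat.cast_zero)
      (by rw [show (⟨(ξ₂.re : ℚ_[p]), (ξ₂.imI : ℚ_[p]), (ξ₂.imJ : ℚ_[p]), (ξ₂.imK : ℚ_[p])⟩ :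
            ℍ[ℚ_[p],(c₁:ℚ_[p]),(c₂:ℚ_[p])]).re = ((ξ₂.re : ℚ) : ℚ_[p]) from rfl, hx2re]
          exact Rat.cast_zero)
      (P₁ := -Δ₁) (P₂ := -Δ₂) (S := 2*σZ)
      (by have h := congrArg (fun q : ℚ => (q : ℚ_[p])) hNξ₁
          rw [KanekoAux.Nrd_def] at h ⊢
          push_cast at h ⊢
          linear_combination h)
      (by have h := congrArg (fun q : ℚ => (q : ℚ_[p])) hNξ₂
          rw [KanekoAux.Nrd_def] at h ⊢
          push_cast at h ⊢
          linear_combination h)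
      (by have h := congrArg (fun q : ℚ => (q : ℚ_[p])) hSval
          simp only [QuaternionAlgebra.re_mul, QuaternionAlgebra.re_star,
            QuaternionAlgebra.imI_star, QuaternionAlgebra.imJ_star,
            QuaternionAlgebra.imK_star] at h ⊢
          push_cast at h ⊢
          linear_combination h)
    have h4 : 4*(-Δ₁)*(-Δ₂) - (2*σZ)^2 = 2*(2*(Δ₁*Δ₂ - σZ^2)) := by ring
    rw [h4] at hpdvd
    have hpne2 : ¬ (p:ℤ) ∣ 2 := by
      intro h
      have h2 : p ∣ 2 := by exact_mod_cast h
      have := (Nat.prime_dvd_prime_iff_eq hp Nat.prime_two).mp h2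
      rw [this] at hodd
      exact absurd hodd (by decide)
    have step1 := (Int.Prime.dvd_mul' hp hpdvd).resolve_left hpne2
    exact (Int.Prime.dvd_mul' hp step1).resolve_left hpne2
  -- positivity (Cauchy–Schwarz) or the degenerate case
  -- Step: either the pure parts are proportional (degenerate case), or σZ² < Δ₁Δ₂
  have hQ0 : ((2*(-Δ₁) : ℤ) : ℚ) ≠ 0 := by
    have h : (0:ℤ) < 2*(-Δ₁) := by omega
    exact_mod_cast ne_of_gt (by exact_mod_cast h : (0:ℚ) < ((2*(-Δ₁):ℤ):ℚ))
  set w : ℍ[ℚ,c₁,c₂] :=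
    ((2*σZ : ℤ) : ℚ) • ξ₁ + (-(((2*(-Δ₁) : ℤ)) : ℚ)) • ξ₂ with hwdef
  have hgt : σZ^2 < Δ₁*Δ₂ := by
    by_cases hw : w = 0
    · -- degenerate case: the two embeddings have the same image, contradiction
      exfalso
      set qq : ℚ := ((2*σZ : ℤ) : ℚ) / ((2*(-Δ₁) : ℤ) : ℚ) with hqq
      have hqmul : ((2*(-Δ₁) : ℤ) : ℚ) * qq = ((2*σZ : ℤ) : ℚ) := by
        rw [hqq, mul_comm, div_mul_cancel₀ _ hQ0]
      have hkey : ∀ s t : ℚ,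
          ((2*σZ : ℤ) : ℚ) * (2*s) + -(((2*(-Δ₁) : ℤ)) : ℚ)*(2*t) = 0 → t = qq*s := by
        intro s t h
        have hstep : ((2*(-Δ₁) : ℤ) : ℚ) * (t - qq*s) = 0 := by
          linear_combination (-1/2 : ℚ)*h + (-s)*hqmul
        rcases mul_eq_zero.mp hstep with h' | h'
        · exact absurd h' hQ0
        · linarith
      have hcompI : α₂.imI = qq * α₁.imI := by
        refine hkey _ _ ?_
        have h := congrArg QuaternionAlgebra.imI hw
        simp only [hwdef, QuaternionAlgebra.imI_add, QuaternionAlgebra.imI_smul,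
          QuaternionAlgebra.imI_zero, smul_eq_mul, hx1I, hx2I] at h
        linarith
      have hcompJ : α₂.imJ = qq * α₁.imJ := by
        refine hkey _ _ ?_
        have h := congrArg QuaternionAlgebra.imJ hw
        simp only [hwdef, QuaternionAlgebra.imJ_add, QuaternionAlgebra.imJ_smul,
          QuaternionAlgebra.imJ_zero, smul_eq_mul, hx1J, hx2J] at h
        linarith
      have hcompK : α₂.imK = qq * α₁.imK := by
        refine hkey _ _ ?_
        have h := congrArg QuaternionAlgebra.imK hw
        simp only [hwdef, QuaternionAlgebra.imK_add, QuaternionAlgebra.imK_smul,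
          QuaternionAlgebra.imK_zero, smul_eq_mul, hx1K, hx2K] at h
        linarith
      have hq0 : qq ≠ 0 := by
        intro h0
        rw [h0, zero_mul] at hcompI hcompJ hcompK
        have : (n₂ : ℚ) = ((t₂:ℚ)/2)^2 := by
          rw [← hnα₂, hcompI, hcompJ, hcompK, hb1]; ring
        have hZ : ((t₂^2 - 4*n₂ : ℤ) : ℚ) = 0 := by push_cast; linarith
        have : (t₂^2 - 4*n₂ : ℤ) = 0 := by exact_mod_cast hZ
        omega
      obtain ⟨u, v, huv⟩ := hprim₁.2 α₂ hprim₂.1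
        ⟨((t₂:ℚ) - qq*(t₁:ℚ))/2, qq, by
          ext <;> simp [QuaternionAlgebra.re_add, QuaternionAlgebra.imI_add,
            QuaternionAlgebra.imJ_add, QuaternionAlgebra.imK_add,
            QuaternionAlgebra.re_smul, QuaternionAlgebra.imI_smul,
            QuaternionAlgebra.imJ_smul, QuaternionAlgebra.imK_smul, hb1, ha1,
            hcompI, hcompJ, hcompK] <;> ring⟩
      obtain ⟨u', v', huv'⟩ := hprim₂.2 α₁ hprim₁.1
        ⟨((t₁:ℚ) - qq⁻¹*(t₂:ℚ))/2, qq⁻¹, by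
          have hIm : α₁.imI = qq⁻¹ * α₂.imI ∧ α₁.imJ = qq⁻¹ * α₂.imJ ∧
              α₁.imK = qq⁻¹ * α₂.imK := by
            refine ⟨?_, ?_, ?_⟩ <;>
              [rw [hcompI]; rw [hcompJ]; rw [hcompK]] <;>
              field_simp
          ext <;> simp [QuaternionAlgebra.re_add, QuaternionAlgebra.imI_add,
            QuaternionAlgebra.imJ_add, QuaternionAlgebra.imK_add,
            QuaternionAlgebra.re_smul, QuaternionAlgebra.imI_smul,
            QuaternionAlgebra.imJ_smul, QuaternionAlgebra.imK_smul, ha1, hb1,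
            hIm.1, hIm.2.1, hIm.2.2] <;> field_simp <;> ring⟩
      apply hne
      intro x
      constructor
      · rintro ⟨cc, dd, hx⟩
        refine ⟨cc + dd*u', dd*v', ?_⟩
        rw [hx, huv']
        push_cast
        ext <;> simp [QuaternionAlgebra.re_add, QuaternionAlgebra.imI_add,
          QuaternionAlgebra.imJ_add, QuaternionAlgebra.imK_add, QuaternionAlgebra.re_smul,
          QuaternionAlgebra.imI_smul, QuaternionAlgebra.imJ_smul,
          QuaternionAlgebra.imK_smul] <;> ring
      · rintro ⟨cc, dd, hx⟩
        refine ⟨cc + dd*u, dd*v, ?_⟩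
        rw [hx, huv]
        push_cast
        ext <;> simp [QuaternionAlgebra.re_add, QuaternionAlgebra.imI_add,
          QuaternionAlgebra.imJ_add, QuaternionAlgebra.imK_add, QuaternionAlgebra.re_smul,
          QuaternionAlgebra.imI_smul, QuaternionAlgebra.imJ_smul,
          QuaternionAlgebra.imK_smul] <;> ring
    · -- nondegenerate: positivity of the norm form gives the strict inequality
      have hpos := KanekoAux.Nrd'_pos hc₁ hc₂ hw
      rw [← KanekoAux.Nrd_def] at hpos
      rw [hwdef, KanekoAux.Nrd_combo, hNξ₁, hNξ₂, hSval] at hpos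
      have hposQ : 0 < ((-Δ₁ : ℤ) : ℚ) * ((4:ℚ) * (((Δ₁*Δ₂ - σZ^2 : ℤ)) : ℚ)) := by
        push_cast at hpos ⊢
        nlinarith [hpos]
      have hN₁pos : (0:ℚ) < ((-Δ₁ : ℤ) : ℚ) := by exact_mod_cast (by omega : (0:ℤ) < -Δ₁)
      have h4pos : (0:ℚ) < (((Δ₁*Δ₂ - σZ^2 : ℤ)) : ℚ) := by
        by_contra hcon
        push_neg at hcon
        nlinarith
      have : (0:ℤ) < Δ₁*Δ₂ - σZ^2 := by exact_mod_cast h4pos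
      omega
  -- Final arithmetic
  obtain ⟨m, hm⟩ := hsame
  set M : ℤ := |m| with hM
  have hM2 : M^2 = Δ₁*Δ₂ := by rw [hM, sq_abs]; omega
  have hMnn : 0 ≤ M := abs_nonneg m
  have hMσ : σZ < M ∧ -M < σZ := by
    constructor <;> nlinarith [hgt, hM2, hMnn]
  -- parity : M and σZ have the same parity
  have hpar : Even (M - σZ) := by
    have h4 : M^2 - σZ^2 = 4*(-(n₁*t₂^2) - n₂*t₁^2 + 4*n₁*n₂ - ρ^2 + ρ*(t₁*t₂)) := by
      rw [hM2, hΔ₁, hΔ₂, hσZdef]; ring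
    have heven2 : Even (M^2 - σZ^2) := ⟨2*(-(n₁*t₂^2) - n₂*t₁^2 + 4*n₁*n₂ - ρ^2 + ρ*(t₁*t₂)),
      by omega⟩
    have hiff : Even (M^2) ↔ Even (σZ^2) := (Int.even_sub).mp heven2
    have h1 : Even M ↔ Even σZ := by
      have hM' : Even (M^2) ↔ Even M := by rw [Int.even_pow]; simp
      have hσ' : Even (σZ^2) ↔ Even σZ := by rw [Int.even_pow]; simp
      rw [← hM', ← hσ']; exact hiff
    exact (Int.even_sub).mpr h1
  have hdvdfac : (p:ℤ) ∣ (M - σZ)*(M + σZ) := by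
    have : (M - σZ)*(M + σZ) = Δ₁*Δ₂ - σZ^2 := by rw [← hM2]; ring
    rw [this]; exact hdvdZ
  have hpne2 : ¬ (p:ℤ) ∣ 2 := by
    intro h
    have h2 : p ∣ 2 := by exact_mod_cast h
    have := (Nat.prime_dvd_prime_iff_eq hp Nat.prime_two).mp h2
    rw [this] at hodd
    exact absurd hodd (by decide)
  have hplt : (p:ℤ) < M := by
    rcases Int.Prime.dvd_mul' hp hdvdfac with h | h
    · obtain ⟨g, hg⟩ := hpar
      have hpg : (p:ℤ) ∣ g := by
        have h2g : (p:ℤ) ∣ 2*g := by rw [show (2:ℤ)*g = M - σZ by omega]; exact h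
        exact (Int.Prime.dvd_mul' hp h2g).resolve_left hpne2
      have hgpos : 0 < g := by omega
      have := Int.le_of_dvd hgpos hpg
      omega
    · have hpar' : Even (M + σZ) := by
        obtain ⟨g, hg⟩ := hpar
        exact ⟨g + σZ, by omega⟩
      obtain ⟨g, hg⟩ := hpar'
      have hpg : (p:ℤ) ∣ g := by
        have h2g : (p:ℤ) ∣ 2*g := by rw [show (2:ℤ)*g = M + σZ by omega]; exact h
        exact (Int.Prime.dvd_mul' hp h2g).resolve_left hpne2
      have hgpos : 0 < g := by omega
      have := Int.le_of_dvd hgpos hpg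
      omega
  have hppos : (0:ℤ) ≤ (p:ℤ) := by positivity
  nlinarith [hplt, hM2]
end

section
/- Let 𝒪 be a maximal order in B_{p,∞} (p odd) and 𝔒 an imaginary quadratic order with |Δ_𝔒| < p. If ι, ι′ : 𝔒 ↪ 𝒪 are two primitive embeddings, then ι′ = ι or ι′ = ῑ, where ῑ(α) := ι(ᾱ). -/
open Quaternion

/- ----------------------------------------------------------------
   Auxiliary lemmas
----------------------------------------------------------------- -/

/-- In a quaternion algebra `(a,b)` over a field, if `a` is a square then there are
nonzero non-units. -/
lemma aux_no_sq_unit {K : Type*} [Field K] {a b : K}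
    (h : ∀ x : ℍ[K, a, b], x ≠ 0 → IsUnit x) {s : K} (hs : s ^ 2 = a) : False := by
  have hx0 : (⟨s, 1, 0, 0⟩ : ℍ[K,a,b]) ≠ 0 := by
    intro hc
    simpa using congrArg QuaternionAlgebra.imI hc
  have hy0 : (star (⟨s, 1, 0, 0⟩ : ℍ[K,a,b])) ≠ 0 := by
    intro hc
    simpa using congrArg QuaternionAlgebra.imI hc
  have hmul : (⟨s, 1, 0, 0⟩ : ℍ[K,a,b]) * star (⟨s, 1, 0, 0⟩ : ℍ[K,a,b]) = 0 := by
    ext <;> simp <;> linear_combination hs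
  obtain ⟨u, hu⟩ := h _ hx0
  apply hy0
  calc star (⟨s, 1, 0, 0⟩ : ℍ[K,a,b])
      = (↑u⁻¹ * u) * star (⟨s, 1, 0, 0⟩ : ℍ[K,a,b]) := by simp
    _ = ↑u⁻¹ * ((⟨s, 1, 0, 0⟩ : ℍ[K,a,b]) * star (⟨s, 1, 0, 0⟩ : ℍ[K,a,b])) := by
        rw [hu, mul_assoc]
    _ = 0 := by rw [hmul, mul_zero]

/-- Variant of `aux_no_sq_unit` for the second structure constant. -/
lemma aux_no_sq_unit' {K : Type*} [Field K] {a b : K}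
    (h : ∀ x : ℍ[K, a, b], x ≠ 0 → IsUnit x) {s : K} (hs : s ^ 2 = b) : False := by
  have hx0 : (⟨s, 0, 1, 0⟩ : ℍ[K,a,b]) ≠ 0 := by
    intro hc
    simpa using congrArg QuaternionAlgebra.imJ hc
  have hy0 : (star (⟨s, 0, 1, 0⟩ : ℍ[K,a,b])) ≠ 0 := by
    intro hc
    simpa using congrArg QuaternionAlgebra.imJ hc
  have hmul : (⟨s, 0, 1, 0⟩ : ℍ[K,a,b]) * star (⟨s, 0, 1, 0⟩ : ℍ[K,a,b]) = 0 := by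
    ext <;> simp <;> linear_combination hs
  obtain ⟨u, hu⟩ := h _ hx0
  apply hy0
  calc star (⟨s, 0, 1, 0⟩ : ℍ[K,a,b])
      = (↑u⁻¹ * u) * star (⟨s, 0, 1, 0⟩ : ℍ[K,a,b]) := by simp
    _ = ↑u⁻¹ * ((⟨s, 0, 1, 0⟩ : ℍ[K,a,b]) * star (⟨s, 0, 1, 0⟩ : ℍ[K,a,b])) := by
        rw [hu, mul_assoc]
    _ = 0 := by rw [hmul, mul_zero]

/-- A rational scalar lying in an order is an integer. -/
lemma aux_scalar_mem_int {c₁ c₂ : ℚ} {O : Subring ℍ[ℚ, c₁, c₂]} (hO : IsOrder O) {q : ℚ}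
    (hq : (q • 1 : ℍ[ℚ, c₁, c₂]) ∈ O) : ∃ z : ℤ, (z : ℚ) = q := by
  obtain ⟨e, he⟩ := hO
  have hOM : ∀ x : ℍ[ℚ, c₁, c₂], x ∈ O ↔ x ∈ Submodule.span ℤ (Set.range e) := by
    intro x
    rw [he, Submodule.mem_span_range_iff_exists_fun]
    constructor
    · rintro ⟨c, rfl⟩
      exact ⟨c, by simp [Int.cast_smul_eq_zsmul]⟩
    · rintro ⟨c, rfl⟩
      exact ⟨c, by simp [Int.cast_smul_eq_zsmul]⟩
  have hfg : (subalgebraOfSubring O).toSubmodule.FG := by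
    have : (subalgebraOfSubring O).toSubmodule = Submodule.span ℤ (Set.range e) := by
      ext x
      simpa using hOM x
    rw [this]
    exact Submodule.fg_span (Set.finite_range e)
  have hint : IsIntegral ℤ (q • 1 : ℍ[ℚ, c₁, c₂]) :=
    IsIntegral.of_mem_of_fg _ hfg _ (by simpa using hq)
  rw [← Algebra.algebraMap_eq_smul_one] at hint
  have : IsIntegral ℤ q :=
    (isIntegral_algebraMap_iff (RingHom.injective (algebraMap ℚ ℍ[ℚ, c₁, c₂]))).mp hint
  obtain ⟨z, hz⟩ := IsIntegrallyClosed.isIntegral_iff.mp this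
  exact ⟨z, by simpa using hz⟩

set_option maxHeartbeats 1600000 in
/-- Let `𝒪` be a maximal order in `B_{p,∞}` (`p` odd) and `𝔒 = ℤ[ω]` an imaginary
quadratic order (generator of trace `t`, norm `n`, discriminant `Δ = t² - 4n`) with
`|Δ| < p`.  If `ι, ι' : 𝔒 ↪ 𝒪` are two primitive embeddings, given by the images
`α = ι(ω)` and `α' = ι'(ω)`, then `ι' = ι` or `ι' = ῑ`, i.e. `α' = α` or
`α' = t - α` (the image of the conjugate `ω̄ = t - ω`). -/
theorem primitive_embedding_unique_up_to_conj (p : ℕ) [Fact p.Prime] (hodd : Odd p)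
    (c₁ c₂ : ℚ) (hB : IsBpInfty p c₁ c₂)
    (O : Subring ℍ[ℚ, c₁, c₂]) (hO : IsMaximalOrder O)
    (α α' : ℍ[ℚ, c₁, c₂]) (t n : ℤ)
    (ht : trd α = (t : ℚ)) (hn : nrd α = (n : ℚ))
    (ht' : trd α' = (t : ℚ)) (hn' : nrd α' = (n : ℚ))
    (Δ : ℤ) (hΔ : Δ = t ^ 2 - 4 * n) (hneg : Δ < 0) (hsmall : |Δ| < (p : ℤ))
    (hprim : IsPrimitiveEmbedding O α) (hprim' : IsPrimitiveEmbedding O α') :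
    α' = α ∨ α' = (t : ℍ[ℚ, c₁, c₂]) - α := by
  by_contra hcon
  push_neg at hcon
  obtain ⟨hne1, hne2⟩ := hcon
  -- unfold trace and norm hypotheses into components
  have Ht : 2 * α.re = (t : ℚ) := ht
  have Ht' : 2 * α'.re = (t : ℚ) := ht'
  have Hn : (n : ℚ) = α.re^2 - c₁*α.imI^2 - c₂*α.imJ^2 + c₁*c₂*α.imK^2 := by
    rw [← hn]; simp [nrd]; ring
  have Hn' : (n : ℚ) = α'.re^2 - c₁*α'.imI^2 - c₂*α'.imJ^2 + c₁*c₂*α'.imK^2 := by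
    rw [← hn']; simp [nrd]; ring
  have hΔq : (Δ : ℚ) = (t : ℚ)^2 - 4*(n : ℚ) := by exact_mod_cast hΔ
  -- the two elements δ = α - α', σ = α + α' - t
  set δ : ℍ[ℚ, c₁, c₂] := α - α' with hδdef
  set σ : ℍ[ℚ, c₁, c₂] := α + α' - (t : ℍ[ℚ, c₁, c₂]) with hσdef
  have hδ0 : δ ≠ 0 := sub_ne_zero.mpr (Ne.symm hne1)
  have hσ0 : σ ≠ 0 := by
    intro hc
    apply hne2
    have h1 : α + α' - (t : ℍ[ℚ, c₁, c₂]) = 0 := hc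
    have h2 : α + α' = (t : ℍ[ℚ, c₁, c₂]) := by
      have := sub_eq_zero.mp h1
      simpa using this
    exact eq_sub_of_add_eq' h2
  -- components
  have hδre : δ.re = 0 := by
    simp only [hδdef, QuaternionAlgebra.re_sub]
    linear_combination Ht/2 - Ht'/2
  have hσre : σ.re = 0 := by
    simp only [hσdef, QuaternionAlgebra.re_sub, QuaternionAlgebra.re_add,
      QuaternionAlgebra.re_intCast]
    linear_combination Ht/2 + Ht'/2
  -- the two "norms"
  set dA : ℚ := -(c₁*δ.imI^2 + c₂*δ.imJ^2 - c₁*c₂*δ.imK^2) with hdAdef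
  set dB : ℚ := -(c₁*σ.imI^2 + c₂*σ.imJ^2 - c₁*c₂*σ.imK^2) with hdBdef
  -- squares are scalars
  have hQδ : δ * δ = (-dA) • (1 : ℍ[ℚ, c₁, c₂]) := by
    ext
    · simp [hdAdef]
      linear_combination (δ.re) * hδre
    · simp
      linear_combination (2*δ.imI) * hδre
    · simp
      linear_combination (2*δ.imJ) * hδre
    · simp
      linear_combination (2*δ.imK) * hδre
  have hQσ : σ * σ = (-dB) • (1 : ℍ[ℚ, c₁, c₂]) := by
    ext
    · simp [hdBdef]
      linear_combination (σ.re) * hσre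
    · simp
      linear_combination (2*σ.imI) * hσre
    · simp
      linear_combination (2*σ.imJ) * hσre
    · simp
      linear_combination (2*σ.imK) * hσre
  -- orthogonality
  have hcross : c₁*(δ.imI*σ.imI) + c₂*(δ.imJ*σ.imJ) - c₁*c₂*(δ.imK*σ.imK) = 0 := by
    simp only [hδdef, hσdef, QuaternionAlgebra.imI_sub, QuaternionAlgebra.imJ_sub,
      QuaternionAlgebra.imK_sub, QuaternionAlgebra.imI_add, QuaternionAlgebra.imJ_add,
      QuaternionAlgebra.imK_add, QuaternionAlgebra.imI_intCast, QuaternionAlgebra.imJ_intCast,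
      QuaternionAlgebra.imK_intCast, sub_zero]
    linear_combination Hn - Hn' + ((α.re + α'.re)/2) * Ht - ((α.re + α'.re)/2) * Ht'
  -- sum of norms is -Δ
  have hsum : dA + dB = -(Δ : ℚ) := by
    simp only [hdAdef, hdBdef, hδdef, hσdef, QuaternionAlgebra.imI_sub, QuaternionAlgebra.imJ_sub,
      QuaternionAlgebra.imK_sub, QuaternionAlgebra.imI_add, QuaternionAlgebra.imJ_add,
      QuaternionAlgebra.imK_add, QuaternionAlgebra.imI_intCast, QuaternionAlgebra.imJ_intCast,
      QuaternionAlgebra.imK_intCast, sub_zero]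
    linear_combination (-2)*Hn + (-2)*Hn' + hΔq + (-α.re - (t:ℚ)/2)*Ht + (-α'.re - (t:ℚ)/2)*Ht'
  -- negativity of c₁ and c₂
  have hc₁R : (c₁ : ℝ) < 0 := by
    by_contra hc
    push_neg at hc
    exact aux_no_sq_unit hB.1 (Real.sq_sqrt hc)
  have hc₂R : (c₂ : ℝ) < 0 := by
    by_contra hc
    push_neg at hc
    exact aux_no_sq_unit' hB.1 (Real.sq_sqrt hc)
  have hc₁ : c₁ < 0 := by exact_mod_cast hc₁R
  have hc₂ : c₂ < 0 := by exact_mod_cast hc₂R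
  -- positivity of dA, dB
  have hpos : ∀ x : ℍ[ℚ, c₁, c₂], x ≠ 0 → x.re = 0 →
      0 < -(c₁*x.imI^2 + c₂*x.imJ^2 - c₁*c₂*x.imK^2) := by
    intro x hx hxre
    have hcomp : x.imI ≠ 0 ∨ x.imJ ≠ 0 ∨ x.imK ≠ 0 := by
      by_contra hc
      push_neg at hc
      exact hx (by ext <;> simp [hxre, hc.1, hc.2.1, hc.2.2])
    have hnc₁ : (0:ℚ) < -c₁ := by linarith
    have hnc₂ : (0:ℚ) < -c₂ := by linarith
    have hcc : (0:ℚ) < c₁*c₂ := by nlinarith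
    have h1 : 0 ≤ -c₁*x.imI^2 := mul_nonneg hnc₁.le (sq_nonneg _)
    have h2 : 0 ≤ -c₂*x.imJ^2 := mul_nonneg hnc₂.le (sq_nonneg _)
    have h3 : 0 ≤ c₁*c₂*x.imK^2 := mul_nonneg hcc.le (sq_nonneg _)
    rcases hcomp with h | h | h
    · have : 0 < -c₁*x.imI^2 := mul_pos hnc₁ (by positivity)
      linarith
    · have : 0 < -c₂*x.imJ^2 := mul_pos hnc₂ (by positivity)
      linarith
    · have : 0 < c₁*c₂*x.imK^2 := mul_pos hcc (by positivity)
      linarith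
  have hdApos : 0 < dA := hpos δ hδ0 hδre
  have hdBpos : 0 < dB := hpos σ hσ0 hσre
  -- integrality
  have hδO : δ ∈ O := O.sub_mem hprim.1 hprim'.1
  have hσO : σ ∈ O := O.sub_mem (O.add_mem hprim.1 hprim'.1) (intCast_mem O t)
  obtain ⟨zA, hzA⟩ := aux_scalar_mem_int hO.1 (q := -dA) (hQδ ▸ O.mul_mem hδO hδO)
  obtain ⟨zB, hzB⟩ := aux_scalar_mem_int hO.1 (q := -dB) (hQσ ▸ O.mul_mem hσO hσO)
  set DA : ℤ := -zA with hDAdef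
  set DB : ℤ := -zB with hDBdef
  have hDA : (DA : ℚ) = dA := by rw [hDAdef]; push_cast; linear_combination -hzA
  have hDB : (DB : ℚ) = dB := by rw [hDBdef]; push_cast; linear_combination -hzB
  have hDApos : 0 < DA := by
    have h1 : (0:ℚ) < (DA:ℚ) := by rw [hDA]; exact hdApos
    exact_mod_cast h1
  have hDBpos : 0 < DB := by
    have h1 : (0:ℚ) < (DB:ℚ) := by rw [hDB]; exact hdBpos
    exact_mod_cast h1
  have hsumZ : DA + DB = -Δ := by
    have h1 : ((DA + DB : ℤ) : ℚ) = ((-Δ : ℤ) : ℚ) := by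
      push_cast
      rw [hDA, hDB]
      exact hsum
    exact_mod_cast h1
  -- bounds : 0 < DA < p, 0 < DB < p
  have habs : -Δ < (p : ℤ) := by rwa [abs_of_neg hneg] at hsmall
  have hDAlt : DA < (p : ℤ) := by omega
  have hDBlt : DB < (p : ℤ) := by omega
  have hpDA : ¬ ((p : ℤ) ∣ DA) := fun hdvd => by have := Int.le_of_dvd hDApos hdvd; omega
  have hpDB : ¬ ((p : ℤ) ∣ DB) := fun hdvd => by have := Int.le_of_dvd hDBpos hdvd; omega
  have hDAmod : ((DA : ZMod p)) ≠ 0 := by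
    rw [Ne, ZMod.intCast_zmod_eq_zero_iff_dvd]; exact hpDA
  have hDBmod : ((DB : ZMod p)) ≠ 0 := by
    rw [Ne, ZMod.intCast_zmod_eq_zero_iff_dvd]; exact hpDB
  -- find a zero of z² + DA x² + DB y² mod p
  have hcard : Fintype.card (ZMod p) % 2 = 1 := by
    rw [ZMod.card p]
    exact Nat.odd_iff.mp hodd
  obtain ⟨a, b, hab⟩ := FiniteField.exists_root_sum_quadratic
    (f := Polynomial.C ((DA : ZMod p)) * Polynomial.X^2)
    (g := Polynomial.C ((DB : ZMod p)) * Polynomial.X^2 + Polynomial.C 1)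
    (by rw [Polynomial.degree_C_mul_X_pow _ hDAmod]; rfl)
    (by
      have h1 : (Polynomial.C ((DB : ZMod p)) * Polynomial.X^2).degree = 2 := by
        rw [Polynomial.degree_C_mul_X_pow _ hDBmod]; rfl
      have h2 : (Polynomial.C (1 : ZMod p)).degree
          < (Polynomial.C ((DB : ZMod p)) * Polynomial.X^2).degree := by
        rw [h1]
        exact lt_of_le_of_lt Polynomial.degree_C_le (by norm_num)
      rw [Polynomial.degree_add_eq_left_of_degree_lt h2, h1])
    hcard
  simp only [Polynomial.eval_add, Polynomial.eval_mul, Polynomial.eval_pow, Polynomial.eval_C,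
    Polynomial.eval_X, Polynomial.eval_one] at hab
  -- lift to ℤ
  set A : ℤ := (a.val : ℤ) with hAdef
  set B : ℤ := (b.val : ℤ) with hBdef
  set Cc : ℤ := DA * A^2 + DB * B^2 with hCcdef
  have hCcmod : ((Cc : ZMod p)) = -1 := by
    push_cast [hCcdef, hAdef, hBdef]
    rw [ZMod.natCast_val, ZMod.natCast_val, ZMod.cast_id, ZMod.cast_id]
    linear_combination hab
  have hCcne : Cc ≠ 0 := by
    intro hc
    rw [hc] at hCcmod
    have h1 : ((0 : ℤ) : ZMod p) = 0 := by norm_num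
    rw [h1] at hCcmod
    exact (neg_ne_zero.mpr (one_ne_zero)) hCcmod.symm
  -- Hensel: a square root of -Cc in ℤ_p
  have hp2 : p ≠ 2 := by
    rintro rfl
    simp [Nat.odd_iff] at hodd
  have hpdvd : (p : ℤ) ∣ 1 + Cc := by
    rw [← ZMod.intCast_zmod_eq_zero_iff_dvd]
    push_cast [hCcmod]
    ring
  have hnorm2 : ‖(2 : ℤ_[p])‖ = 1 := by
    refine le_antisymm (PadicInt.norm_le_one _) ?_
    by_contra hc
    push_neg at hc
    have : ‖((2 : ℤ) : ℤ_[p])‖ < 1 := by exact_mod_cast hc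
    rw [PadicInt.norm_int_lt_one_iff_dvd] at this
    have := Int.le_of_dvd (by norm_num) this
    have hp3 : 3 ≤ (p : ℤ) := by
      have := (Fact.out : p.Prime).two_le
      omega
    omega
  set F : Polynomial ℤ_[p] := Polynomial.X^2 + Polynomial.C ((Cc : ℤ_[p])) with hFdef
  have hF1 : F.eval 1 = ((1 + Cc : ℤ) : ℤ_[p]) := by
    rw [hFdef]
    simp only [Polynomial.eval_add, Polynomial.eval_pow, Polynomial.eval_X, Polynomial.eval_C,
      one_pow]
    push_cast
    ring
  have hFd : F.derivative.eval 1 = 2 := by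
    rw [hFdef]
    simp
    exact one_add_one_eq_two
  have hlt : ‖F.eval 1‖ < ‖F.derivative.eval 1‖^2 := by
    rw [hF1, hFd, hnorm2, one_pow]
    rw [PadicInt.norm_int_lt_one_iff_dvd]
    exact_mod_cast hpdvd
  obtain ⟨z, hzF, -⟩ := hensels_lemma hlt
  have hz2 : z*z + ((Cc : ℤ) : ℤ_[p]) = 0 := by
    have : z^2 + ((Cc : ℤ) : ℤ_[p]) = 0 := by simpa [hFdef] using hzF
    linear_combination this
  have hzne : z ≠ 0 := by
    intro hc
    rw [hc, mul_zero, zero_add] at hz2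
    exact hCcne (by exact_mod_cast hz2)
  -- build the zero divisor in ℍ[ℚ_p]
  set zz : ℚ_[p] := (z : ℚ_[p]) with hzzdef
  have hzzne : zz ≠ 0 := PadicInt.coe_ne_zero.mpr hzne
  have hzz2 : zz * zz = -((DA : ℚ_[p]) * (A : ℚ_[p])^2 + (DB : ℚ_[p]) * (B : ℚ_[p])^2) := by
    have h1 : ((z * z + ((Cc : ℤ) : ℤ_[p]) : ℤ_[p]) : ℚ_[p]) = ((0 : ℤ_[p]) : ℚ_[p]) := by
      rw [hz2]
    rw [PadicInt.coe_add, PadicInt.coe_mul, PadicInt.coe_intCast, PadicInt.coe_zero] at h1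
    rw [hCcdef] at h1
    push_cast at h1
    rw [hzzdef]
    linear_combination h1
  set uI : ℚ_[p] := (A : ℚ_[p]) * ((δ.imI : ℚ) : ℚ_[p]) + (B : ℚ_[p]) * ((σ.imI : ℚ) : ℚ_[p]) with huIdef
  set uJ : ℚ_[p] := (A : ℚ_[p]) * ((δ.imJ : ℚ) : ℚ_[p]) + (B : ℚ_[p]) * ((σ.imJ : ℚ) : ℚ_[p]) with huJdef
  set uK : ℚ_[p] := (A : ℚ_[p]) * ((δ.imK : ℚ) : ℚ_[p]) + (B : ℚ_[p]) * ((σ.imK : ℚ) : ℚ_[p]) with huKdef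
  set ξ : ℍ[ℚ_[p], (c₁ : ℚ_[p]), (c₂ : ℚ_[p])] := ⟨zz, uI, uJ, uK⟩ with hξdef
  set ξ' : ℍ[ℚ_[p], (c₁ : ℚ_[p]), (c₂ : ℚ_[p])] := ⟨zz, -uI, -uJ, -uK⟩ with hξ'def
  have hξ0 : ξ ≠ 0 := by
    intro hc
    exact hzzne (by simpa [hξdef] using congrArg QuaternionAlgebra.re hc)
  have hξ'0 : ξ' ≠ 0 := by
    intro hc
    exact hzzne (by simpa [hξ'def] using congrArg QuaternionAlgebra.re hc)
  -- cast the quadratic relations to K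
  have hdAK : (c₁ : ℚ_[p]) * ((δ.imI : ℚ) : ℚ_[p])^2 + (c₂ : ℚ_[p]) * ((δ.imJ : ℚ) : ℚ_[p])^2
      - (c₁ : ℚ_[p]) * (c₂ : ℚ_[p]) * ((δ.imK : ℚ) : ℚ_[p])^2 = -((DA : ℤ) : ℚ_[p]) := by
    have h0 : c₁*δ.imI^2 + c₂*δ.imJ^2 - c₁*c₂*δ.imK^2 = -dA := by rw [hdAdef]; ring
    have := congrArg (fun w : ℚ => (w : ℚ_[p])) (h0.trans (congrArg Neg.neg hDA.symm))
    push_cast at this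
    push_cast
    linear_combination this
  have hdBK : (c₁ : ℚ_[p]) * ((σ.imI : ℚ) : ℚ_[p])^2 + (c₂ : ℚ_[p]) * ((σ.imJ : ℚ) : ℚ_[p])^2
      - (c₁ : ℚ_[p]) * (c₂ : ℚ_[p]) * ((σ.imK : ℚ) : ℚ_[p])^2 = -((DB : ℤ) : ℚ_[p]) := by
    have h0 : c₁*σ.imI^2 + c₂*σ.imJ^2 - c₁*c₂*σ.imK^2 = -dB := by rw [hdBdef]; ring
    have := congrArg (fun w : ℚ => (w : ℚ_[p])) (h0.trans (congrArg Neg.neg hDB.symm))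
    push_cast at this
    push_cast
    linear_combination this
  have hcrossK : (c₁ : ℚ_[p]) * (((δ.imI : ℚ) : ℚ_[p]) * ((σ.imI : ℚ) : ℚ_[p]))
      + (c₂ : ℚ_[p]) * (((δ.imJ : ℚ) : ℚ_[p]) * ((σ.imJ : ℚ) : ℚ_[p]))
      - (c₁ : ℚ_[p]) * (c₂ : ℚ_[p]) * (((δ.imK : ℚ) : ℚ_[p]) * ((σ.imK : ℚ) : ℚ_[p])) = 0 := by
    have := congrArg (fun w : ℚ => (w : ℚ_[p])) hcross
    push_cast at this
    push_cast
    linear_combination this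
  have hmul0 : ξ * ξ' = 0 := by
    ext
    · show ξ.re * ξ'.re + (c₁ : ℚ_[p]) * ξ.imI * ξ'.imI + (c₂ : ℚ_[p]) * ξ.imJ * ξ'.imJ
        + (0 : ℚ_[p]) * (c₂ : ℚ_[p]) * ξ.imJ * ξ'.imK - (c₁ : ℚ_[p]) * (c₂ : ℚ_[p]) * ξ.imK * ξ'.imK = 0
      simp only [hξdef, hξ'def]
      push_cast [huIdef, huJdef, huKdef]
      linear_combination hzz2 - ((A:ℚ_[p])^2) * hdAK - ((B:ℚ_[p])^2) * hdBK
        - (2*(A:ℚ_[p])*(B:ℚ_[p])) * hcrossK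
    · show ξ.re * ξ'.imI + ξ.imI * ξ'.re + (0 : ℚ_[p]) * ξ.imI * ξ'.imI - (c₂ : ℚ_[p]) * ξ.imJ * ξ'.imK
        + (c₂ : ℚ_[p]) * ξ.imK * ξ'.imJ = 0
      simp only [hξdef, hξ'def]
      ring
    · show ξ.re * ξ'.imJ + (c₁ : ℚ_[p]) * ξ.imI * ξ'.imK + ξ.imJ * ξ'.re
        + (0 : ℚ_[p]) * ξ.imJ * ξ'.imI
        - (c₁ : ℚ_[p]) * ξ.imK * ξ'.imI = 0
      simp only [hξdef, hξ'def]
      ring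
    · show ξ.re * ξ'.imK + ξ.imI * ξ'.imJ + (0 : ℚ_[p]) * ξ.imI * ξ'.imK - ξ.imJ * ξ'.imI + ξ.imK * ξ'.re = 0
      simp only [hξdef, hξ'def]
      ring
  obtain ⟨u, hu⟩ := hB.2.1 ξ hξ0
  apply hξ'0
  calc ξ' = (↑u⁻¹ * u) * ξ' := by simp
    _ = ↑u⁻¹ * (ξ * ξ') := by rw [hu, mul_assoc]
    _ = 0 := by rw [hmul0, mul_zero]
end

section
/- Let 𝒪 be an order in a quaternion algebra over ℚ, and define the discriminant form Δ : 𝒪/ℤ → ℚ by Δ(α̃) = Tr(α)² − 4·nrd(α) for any representative α of the class α̃ (this is well-defined). An element α ∈ 𝒪 is a primitive solution of Δ(α) = d (i.e., the class α̃ is not of the form b·β̃ for β̃ ∈ 𝒪/ℤ and integer b > 1) if and only if the embedding ℤ[α] ⊆ 𝒪 is primitive, i.e., there is no β ∈ (ℚ[α] ∩ 𝒪) \ ℤ[α]. -/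
open Quaternion

section AuxLemmas

open Quaternion

variable {c₁ c₂ : ℚ}

lemma aux_not_scalar {α : ℍ[ℚ, c₁, c₂]} {d : ℤ}
    (hd : trd α ^ 2 - 4 * nrd α = (d : ℚ)) (hd0 : d ≠ 0) (q : ℚ) : α ≠ q • 1 := by
  rintro rfl
  apply hd0
  have h0 : trd (q • (1 : ℍ[ℚ, c₁, c₂])) ^ 2 - 4 * nrd (q • (1 : ℍ[ℚ, c₁, c₂])) = 0 := by
    simp [trd, nrd, QuaternionAlgebra.re_mul]; ring
  exact_mod_cast hd.symm.trans h0

lemma aux_unique {α : ℍ[ℚ, c₁, c₂]} (hns : ∀ q : ℚ, α ≠ q • 1)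
    {u v u' v' : ℚ} (h : u • (1 : ℍ[ℚ, c₁, c₂]) + v • α = u' • 1 + v' • α) :
    u = u' ∧ v = v' := by
  have hv : v = v' := by
    by_contra hvv
    apply hns ((u - u') / (v' - v))
    have h2 : (v' - v) • α = (u - u') • (1 : ℍ[ℚ, c₁, c₂]) := by
      rw [sub_smul, sub_smul]
      linear_combination (norm := module) -h
    rw [div_eq_inv_mul, mul_smul, ← h2, inv_smul_smul₀ (sub_ne_zero.mpr (Ne.symm hvv))]
  subst hv
  refine ⟨?_, rfl⟩
  have h2 : (u - u') • (1 : ℍ[ℚ, c₁, c₂]) = 0 := by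
    rw [sub_smul]; linear_combination (norm := module) h
  have h3 := (smul_eq_zero.mp h2).resolve_right one_ne_zero
  linarith [sub_eq_zero.mp h3]

lemma aux_int_of_mem {O : Subring ℍ[ℚ, c₁, c₂]} (hO : IsOrder O)
    {q : ℚ} (hq : q • (1 : ℍ[ℚ, c₁, c₂]) ∈ O) : ∃ n : ℤ, (n : ℚ) = q := by
  obtain ⟨e, he⟩ := hO
  set T : Submodule ℤ ℍ[ℚ, c₁, c₂] := Submodule.span ℤ (Set.range e) with hT
  set S : Submodule ℤ ℍ[ℚ, c₁, c₂] :=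
    Subalgebra.toSubmodule (subalgebraOfSubring O) with hS
  have hsub : S ≤ T := by
    intro x hx
    rw [hS, Subalgebra.mem_toSubmodule, mem_subalgebraOfSubring, he] at hx
    obtain ⟨c, rfl⟩ := hx
    rw [hT, Submodule.mem_span_range_iff_exists_fun]
    exact ⟨c, by simp [Int.cast_smul_eq_zsmul ℚ]⟩
  haveI hTnoeth : IsNoetherian ℤ T :=
    isNoetherian_of_fg_of_noetherian _ (Submodule.fg_span (Set.finite_range e))
  have hfg : S.FG := by
    have hmap : S = Submodule.map T.subtype (S.comap T.subtype) := by
      rw [Submodule.map_comap_subtype, inf_eq_right.mpr hsub]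
    rw [hmap]
    exact (IsNoetherian.noetherian _).map _
  have hint : IsIntegral ℤ (q • (1 : ℍ[ℚ, c₁, c₂])) :=
    IsIntegral.of_mem_of_fg (subalgebraOfSubring O) hfg _
      (by rwa [mem_subalgebraOfSubring])
  have hint2 : IsIntegral ℤ (algebraMap ℚ ℍ[ℚ, c₁, c₂] q) := by
    rw [Algebra.algebraMap_eq_smul_one]; exact hint
  clear hq
  replace hint := hint2
  have hinj : Function.Injective (algebraMap ℚ ℍ[ℚ, c₁, c₂]) :=
    (algebraMap ℚ ℍ[ℚ, c₁, c₂]).injective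
  have hqint : IsIntegral ℤ q := (isIntegral_algebraMap_iff hinj).mp hint
  obtain ⟨n, hn⟩ := IsIntegrallyClosed.isIntegral_iff.mp hqint
  exact ⟨n, hn⟩

end AuxLemmas

/-- Let `𝒪` be an order in a quaternion algebra over `ℚ` and `α ∈ 𝒪` with
`Δ(α) = Tr(α)² − 4·nrd(α) = d ≠ 0`.  Then `α` is a *primitive solution* of
`Δ(α) = d` (the class of `α` in `𝒪/ℤ` is not `b` times another class, for an
integer `b > 1`) if and only if the embedding `ℤ[α] ⊆ 𝒪` is primitive (there is
no `β ∈ (ℚ[α] ∩ 𝒪) \ ℤ[α]`). -/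
theorem primitive_solution_iff_primitive_embedding (c₁ c₂ : ℚ)
    (O : Subring ℍ[ℚ, c₁, c₂]) (hO : IsOrder O)
    (α : ℍ[ℚ, c₁, c₂]) (hα : α ∈ O) (d : ℤ)
    (hd : trd α ^ 2 - 4 * nrd α = (d : ℚ)) (hd0 : d ≠ 0) :
    (¬ ∃ (b : ℤ) (β : ℍ[ℚ, c₁, c₂]), β ∈ O ∧ 1 < b ∧
        ∃ m : ℤ, α = (m : ℚ) • (1 : ℍ[ℚ, c₁, c₂]) + (b : ℚ) • β) ↔
    ¬ ∃ β : ℍ[ℚ, c₁, c₂], β ∈ O ∧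
        (∃ u v : ℚ, β = u • (1 : ℍ[ℚ, c₁, c₂]) + v • α) ∧
        ¬ ∃ u v : ℤ, β = (u : ℚ) • (1 : ℍ[ℚ, c₁, c₂]) + (v : ℚ) • α := by
  have hns : ∀ q : ℚ, α ≠ q • 1 := aux_not_scalar hd hd0
  apply not_congr
  constructor
  · rintro ⟨b, β, hβO, hb, m, hm⟩
    have hb0 : (b : ℚ) ≠ 0 := by positivity
    refine ⟨β, hβO, ⟨-(m / b), 1 / b, ?_⟩, ?_⟩
    · rw [hm]
      match_scalars <;> field_simp <;> ring
    · rintro ⟨u, v, huv⟩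
      have hα2 : α = ((m : ℚ) + b * u) • (1 : ℍ[ℚ, c₁, c₂]) + ((b : ℚ) * v) • α := by
        linear_combination (norm := module) hm + (b : ℚ) • huv
      have h0 : α = (0 : ℚ) • (1 : ℍ[ℚ, c₁, c₂]) + (1 : ℚ) • α := by module
      have := aux_unique hns (hα2.symm.trans h0)
      have hbv : (b : ℚ) * v = 1 := this.2
      have hbv' : b * v = 1 := by exact_mod_cast hbv
      have : (b : ℤ) ≤ 1 := Int.le_of_dvd one_pos ⟨v, hbv'.symm⟩
      omega
  · rintro ⟨β, hβO, ⟨u, v, huv⟩, hnZ⟩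
    -- first, v is not an integer
    have hvnZ : ∀ n : ℤ, (n : ℚ) ≠ v := by
      rintro n rfl
      have hmem : u • (1 : ℍ[ℚ, c₁, c₂]) ∈ O := by
        have : u • (1 : ℍ[ℚ, c₁, c₂]) = β - n • α := by rw [huv]; module
        rw [this]
        exact O.sub_mem hβO (O.zsmul_mem hα n)
      obtain ⟨k, hk⟩ := aux_int_of_mem hO hmem
      exact hnZ ⟨k, n, by rw [huv, hk, Int.cast_smul_eq_zsmul ℚ n α]⟩
    have hden : 1 < v.den := by
      rcases Nat.lt_or_ge 1 v.den with h | h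
      · exact h
      · have h1 : v.den = 1 := le_antisymm h (Nat.one_le_iff_ne_zero.mpr v.den_nz)
        exact absurd ((Rat.den_eq_one_iff v).mp h1) (hvnZ v.num)
    -- Bezout
    have hcop : IsCoprime v.num (v.den : ℤ) := by
      rw [Int.isCoprime_iff_gcd_eq_one]; exact v.reduced
    obtain ⟨s, t, hst⟩ := hcop
    -- γ = s β + t α ∈ O
    set γ : ℍ[ℚ, c₁, c₂] := s • β + t • α with hγ
    have hγO : γ ∈ O := O.add_mem (O.zsmul_mem hβO s) (O.zsmul_mem hα t)
    have hdQ : ((v.den : ℚ)) ≠ 0 := by exact_mod_cast v.den_nz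
    have hsv : (s : ℚ) * v + t = 1 / v.den := by
      have hv : (v.num : ℚ) = v * v.den := by
        symm; rw [← eq_div_iff hdQ]
        exact (Rat.num_div_den v).symm
      have h1 : (s : ℚ) * v.num + t * v.den = 1 := by exact_mod_cast hst
      rw [eq_div_iff hdQ]
      linear_combination h1 - (s : ℚ) * hv
    have hγ_eq : γ = ((s : ℚ) * u) • (1 : ℍ[ℚ, c₁, c₂]) + ((s : ℚ) * v + t) • α := by
      rw [hγ, huv, ← Int.cast_smul_eq_zsmul ℚ s, ← Int.cast_smul_eq_zsmul ℚ t]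
      module
    rw [hsv] at hγ_eq
    have hsmul : (v.den : ℚ) • γ = ((v.den : ℚ) * (s * u)) • (1 : ℍ[ℚ, c₁, c₂]) + α := by
      rw [hγ_eq]
      match_scalars <;> field_simp
    have hmem1 : ((v.den : ℚ) * (s * u)) • (1 : ℍ[ℚ, c₁, c₂]) ∈ O := by
      have h1 : ((v.den : ℚ) * (s * u)) • (1 : ℍ[ℚ, c₁, c₂]) = (v.den : ℤ) • γ - α := by
        rw [← Int.cast_smul_eq_zsmul ℚ (v.den : ℤ) γ]
        push_cast
        rw [hsmul]; module
      rw [h1]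
      exact O.sub_mem (O.zsmul_mem hγO _) hα
    obtain ⟨m', hm'⟩ := aux_int_of_mem hO hmem1
    refine ⟨(v.den : ℤ), γ, hγO, by exact_mod_cast hden, -m', ?_⟩
    have : α = (v.den : ℚ) • γ - ((v.den : ℚ) * (s * u)) • (1 : ℍ[ℚ, c₁, c₂]) := by
      rw [hsmul]; module
    rw [this, ← hm']
    push_cast
    module
end

section
/- Let 𝔒 be an imaginary quadratic order of discriminant Δ with |Δ| < p, let (E, ι) be a primitively 𝔒-oriented supersingular elliptic curve over F̄_p, and let ψ ∈ End(E) be a horizontal endomorphism (i.e., ψ_*(ι) is again a primitive 𝔒-orientation of E) of degree coprime to p. Then there exists α ∈ 𝔒 with ψ = ι(α). -/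
open Quaternion

namespace HorAux

variable {F : Type*} [Field F] {a b : F}

/-- Generic reduced norm. -/
def nrdF (x : ℍ[F,a,b]) : F := (x * star x).re

theorem nrdF_def (x : ℍ[F,a,b]) :
    nrdF x = x.re^2 - a*x.imI^2 - b*x.imJ^2 + a*b*x.imK^2 := by
  simp only [nrdF, QuaternionAlgebra.re_mul, QuaternionAlgebra.re_star,
    QuaternionAlgebra.imI_star, QuaternionAlgebra.imJ_star, QuaternionAlgebra.imK_star]
  ring

theorem mul_star_self (x : ℍ[F,a,b]) : x * star x = nrdF x • (1 : ℍ[F,a,b]) := by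
  ext <;>
    simp [QuaternionAlgebra.re_mul, QuaternionAlgebra.imI_mul, QuaternionAlgebra.imJ_mul,
      QuaternionAlgebra.imK_mul, nrdF_def] <;> ring

theorem star_mul_self (x : ℍ[F,a,b]) : star x * x = nrdF x • (1 : ℍ[F,a,b]) := by
  rw [star_comm_self']; exact mul_star_self x

theorem nrdF_mul (x y : ℍ[F,a,b]) : nrdF (x*y) = nrdF x * nrdF y := by
  have h : (x*y) * star (x*y) = (nrdF x * nrdF y) • (1 : ℍ[F,a,b]) := by
    rw [star_mul, ← mul_assoc, mul_assoc x y, mul_star_self y, mul_smul_comm, mul_one,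
      smul_mul_assoc, mul_star_self x, smul_smul, mul_comm (nrdF y)]
  have h2 := mul_star_self (x*y)
  rw [h] at h2
  have := congrArg QuaternionAlgebra.re h2.symm
  simpa using this

theorem nrdF_star (x : ℍ[F,a,b]) : nrdF (star x) = nrdF x := by
  simp only [nrdF_def, QuaternionAlgebra.re_star, QuaternionAlgebra.imI_star,
    QuaternionAlgebra.imJ_star, QuaternionAlgebra.imK_star]
  ring

theorem nrdF_smul (r : F) (x : ℍ[F,a,b]) : nrdF (r • x) = r^2 * nrdF x := by
  simp only [nrdF_def, QuaternionAlgebra.re_smul, QuaternionAlgebra.imI_smul,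
    QuaternionAlgebra.imJ_smul, QuaternionAlgebra.imK_smul, smul_eq_mul]
  ring

@[simp] theorem nrdF_one : nrdF (1 : ℍ[F,a,b]) = 1 := by simp [nrdF_def]

@[simp] theorem nrdF_zero : nrdF (0 : ℍ[F,a,b]) = 0 := by simp [nrdF_def]

theorem sq_self (x : ℍ[F,a,b]) : x * x = (2*x.re) • x - (nrdF x) • 1 := by
  ext <;>
    simp only [QuaternionAlgebra.re_mul, QuaternionAlgebra.imI_mul, QuaternionAlgebra.imJ_mul,
      QuaternionAlgebra.imK_mul, QuaternionAlgebra.re_sub, QuaternionAlgebra.imI_sub,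
      QuaternionAlgebra.imJ_sub, QuaternionAlgebra.imK_sub, QuaternionAlgebra.re_smul,
      QuaternionAlgebra.imI_smul, QuaternionAlgebra.imJ_smul, QuaternionAlgebra.imK_smul,
      QuaternionAlgebra.re_one, QuaternionAlgebra.imI_one, QuaternionAlgebra.imJ_one,
      QuaternionAlgebra.imK_one, smul_eq_mul, nrdF_def] <;>
    ring

theorem eq_zero_of_mul_eq_zero_right (hdiv : ∀ x : ℍ[F,a,b], x ≠ 0 → IsUnit x)
    {x y : ℍ[F,a,b]} (h : x * y = 0) (hy : y ≠ 0) : x = 0 := by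
  obtain ⟨u, rfl⟩ := hdiv y hy
  have : x * u * ↑u⁻¹ = 0 * ↑u⁻¹ := by rw [h]
  rwa [mul_assoc, u.mul_inv, mul_one, zero_mul] at this

theorem eq_zero_of_mul_eq_zero_left (hdiv : ∀ x : ℍ[F,a,b], x ≠ 0 → IsUnit x)
    {x y : ℍ[F,a,b]} (h : x * y = 0) (hx : x ≠ 0) : y = 0 := by
  obtain ⟨u, rfl⟩ := hdiv x hx
  have : ↑u⁻¹ * (↑u * y) = ↑u⁻¹ * 0 := by rw [h]
  rwa [← mul_assoc, u.inv_mul, one_mul, mul_zero] at this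

theorem star_ne_zero {x : ℍ[F,a,b]} (hx : x ≠ 0) : star x ≠ 0 := by
  intro h
  apply hx
  have := congrArg star h
  simpa using this

theorem nrdF_ne_zero (hdiv : ∀ x : ℍ[F,a,b], x ≠ 0 → IsUnit x)
    {x : ℍ[F,a,b]} (hx : x ≠ 0) : nrdF x ≠ 0 := by
  intro h
  have h2 : x * star x = 0 := by
    rw [mul_star_self, h, zero_smul]
  exact hx (eq_zero_of_mul_eq_zero_right hdiv h2 (star_ne_zero hx))

section qmap

variable {K : Type*} [Field K]

/-- Coordinatewise base-change ring hom between quaternion algebras. -/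
def qmap (f : F →+* K) : ℍ[F,a,b] →+* ℍ[K, f a, f b] where
  toFun x := ⟨f x.re, f x.imI, f x.imJ, f x.imK⟩
  map_one' := by ext <;> simp
  map_zero' := by ext <;> simp
  map_add' x y := by ext <;> simp
  map_mul' x y := by
    ext <;>
      simp only [QuaternionAlgebra.re_mul, QuaternionAlgebra.imI_mul, QuaternionAlgebra.imJ_mul,
        QuaternionAlgebra.imK_mul, map_add, map_sub, map_mul, map_zero]

variable (f : F →+* K)

@[simp] theorem qmap_re (x : ℍ[F,a,b]) : (qmap f x).re = f x.re := rfl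
@[simp] theorem qmap_imI (x : ℍ[F,a,b]) : (qmap f x).imI = f x.imI := rfl
@[simp] theorem qmap_imJ (x : ℍ[F,a,b]) : (qmap f x).imJ = f x.imJ := rfl
@[simp] theorem qmap_imK (x : ℍ[F,a,b]) : (qmap f x).imK = f x.imK := rfl

theorem qmap_star (x : ℍ[F,a,b]) : qmap f (star x) = star (qmap f x) := by
  ext <;> simp [QuaternionAlgebra.imI_star, QuaternionAlgebra.imJ_star,
    QuaternionAlgebra.imK_star, QuaternionAlgebra.re_star]

theorem nrdF_qmap (x : ℍ[F,a,b]) : nrdF (qmap f x) = f (nrdF x) := by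
  simp [nrdF_def, map_add, map_sub, map_mul, map_pow]

theorem qmap_ne_zero {x : ℍ[F,a,b]} (hx : x ≠ 0) : qmap f x ≠ 0 := by
  intro h
  apply hx
  ext
  · simpa using f.injective (by simpa using congrArg QuaternionAlgebra.re h)
  · simpa using f.injective (by simpa using congrArg QuaternionAlgebra.imI h)
  · simpa using f.injective (by simpa using congrArg QuaternionAlgebra.imJ h)
  · simpa using f.injective (by simpa using congrArg QuaternionAlgebra.imK h)

theorem qmap_smul (r : F) (x : ℍ[F,a,b]) : qmap f (r • x) = f r • qmap f x := by
  ext <;> simp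

end qmap

section real

theorem c_neg_left {A B : ℝ} (hdiv : ∀ x : ℍ[ℝ,A,B], x ≠ 0 → IsUnit x) : A < 0 := by
  by_contra hc
  push_neg at hc
  set s := Real.sqrt A with hsdef
  have hs : s * s = A := Real.mul_self_sqrt hc
  have hprod : ((⟨s, -1, 0, 0⟩ : ℍ[ℝ,A,B]) * ⟨s, 1, 0, 0⟩) = 0 := by
    ext <;> simp [QuaternionAlgebra.re_mul, QuaternionAlgebra.imI_mul,
      QuaternionAlgebra.imJ_mul, QuaternionAlgebra.imK_mul, hs]
  have hy : (⟨s, 1, 0, 0⟩ : ℍ[ℝ,A,B]) ≠ 0 := by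
    intro h
    simpa using congrArg QuaternionAlgebra.imI h
  have h0 := eq_zero_of_mul_eq_zero_right hdiv hprod hy
  simpa using congrArg QuaternionAlgebra.imI h0

theorem c_neg_right {A B : ℝ} (hdiv : ∀ x : ℍ[ℝ,A,B], x ≠ 0 → IsUnit x) : B < 0 := by
  by_contra hc
  push_neg at hc
  set s := Real.sqrt B with hsdef
  have hs : s * s = B := Real.mul_self_sqrt hc
  have hprod : ((⟨s, 0, -1, 0⟩ : ℍ[ℝ,A,B]) * ⟨s, 0, 1, 0⟩) = 0 := by
    ext <;> simp [QuaternionAlgebra.re_mul, QuaternionAlgebra.imI_mul,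
      QuaternionAlgebra.imJ_mul, QuaternionAlgebra.imK_mul, hs]
  have hy : (⟨s, 0, 1, 0⟩ : ℍ[ℝ,A,B]) ≠ 0 := by
    intro h
    simpa using congrArg QuaternionAlgebra.imJ h
  have h0 := eq_zero_of_mul_eq_zero_right hdiv hprod hy
  simpa using congrArg QuaternionAlgebra.imJ h0

end real

section pos

variable {F : Type*} [Field F] [LinearOrder F] [IsStrictOrderedRing F] {a b : F}

theorem nrdF_pos (ha : a < 0) (hb : b < 0) {x : ℍ[F,a,b]} (hx : x ≠ 0) : 0 < nrdF x := by
  have hcoord : x.re ≠ 0 ∨ x.imI ≠ 0 ∨ x.imJ ≠ 0 ∨ x.imK ≠ 0 := by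
    by_contra h
    push_neg at h
    exact hx (by ext <;> simp [h.1, h.2.1, h.2.2.1, h.2.2.2])
  rw [nrdF_def]
  have h1 : (0:F) ≤ x.re^2 := sq_nonneg _
  have h2 : (0:F) ≤ -a * x.imI^2 := mul_nonneg (by linarith) (sq_nonneg _)
  have h3 : (0:F) ≤ -b * x.imJ^2 := mul_nonneg (by linarith) (sq_nonneg _)
  have h4 : (0:F) ≤ a*b * x.imK^2 := mul_nonneg (le_of_lt (mul_pos_of_neg_of_neg ha hb)) (sq_nonneg _)
  rcases hcoord with h | h | h | h
  · have : 0 < x.re^2 := by positivity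
    nlinarith
  · have : 0 < x.imI^2 := by positivity
    nlinarith
  · have : 0 < x.imJ^2 := by positivity
    nlinarith
  · have h5 : 0 < x.imK^2 := by positivity
    have h6 : 0 < a*b*x.imK^2 := mul_pos (mul_pos_of_neg_of_neg ha hb) h5
    nlinarith

end pos

section padic

open Polynomial

variable {p : ℕ} [Fact p.Prime]

theorem toZMod_eq_zero_iff_dvd (x : ℤ_[p]) : PadicInt.toZMod x = 0 ↔ (p:ℤ_[p]) ∣ x := by
  rw [← RingHom.mem_ker, PadicInt.ker_toZMod, PadicInt.maximalIdeal_eq_span_p,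
    Ideal.mem_span_singleton]

theorem norm_eq_one_of_toZMod_ne_zero {x : ℤ_[p]} (h : PadicInt.toZMod x ≠ 0) : ‖x‖ = 1 := by
  refine le_antisymm (PadicInt.norm_le_one x) ?_
  by_contra hlt
  push_neg at hlt
  exact h ((toZMod_eq_zero_iff_dvd x).2 ((PadicInt.norm_lt_one_iff_dvd x).1 hlt))

theorem two_ne_zero_zmod (hp2 : p ≠ 2) : (2 : ZMod p) ≠ 0 := by
  have : ((2:ℕ) : ZMod p) ≠ 0 := by
    rw [Ne, ZMod.natCast_eq_zero_iff]
    intro h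
    exact hp2 ((Nat.prime_dvd_prime_iff_eq (Fact.out) Nat.prime_two).1 h)
  simpa using this

theorem padic_sqrt (hp2 : p ≠ 2) {b' a₀ : ℤ_[p]} (h1 : PadicInt.toZMod (a₀*a₀ - b') = 0)
    (h2 : PadicInt.toZMod a₀ ≠ 0) : ∃ x : ℤ_[p], x*x = b' := by
  have hda : (X^2 - C b' : Polynomial ℤ_[p]).derivative = C 2 * X := by
    simp [derivative_sub, derivative_X_pow]
    rw [one_add_one_eq_two]
    exact (map_ofNat C 2).symm
  have heval : (X^2 - C b' : Polynomial ℤ_[p]).eval a₀ = a₀*a₀ - b' := by simp [sq]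
  have hdeval : (X^2 - C b' : Polynomial ℤ_[p]).derivative.eval a₀ = 2*a₀ := by simp [hda]
  have hn2 : ‖(2:ℤ_[p])‖ = 1 := norm_eq_one_of_toZMod_ne_zero (by
    rw [map_ofNat]
    exact two_ne_zero_zmod hp2)
  have key : ‖(X^2 - C b' : Polynomial ℤ_[p]).eval a₀‖
      < ‖(X^2 - C b' : Polynomial ℤ_[p]).derivative.eval a₀‖^2 := by
    rw [heval, hdeval, norm_mul, hn2, norm_eq_one_of_toZMod_ne_zero h2]
    have : ‖a₀*a₀ - b'‖ < 1 := by
      rw [PadicInt.norm_lt_one_iff_dvd]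
      exact (toZMod_eq_zero_iff_dvd _).1 h1
    simpa using this
  obtain ⟨z, hz, -⟩ := hensels_lemma key
  refine ⟨z, ?_⟩
  have : z^2 - b' = 0 := by simpa using hz
  rw [← sq]
  exact sub_eq_zero.1 this

theorem padic_norm_form_solves (hp2 : p ≠ 2) (D c : ℤ) (hD : ¬ (p:ℤ) ∣ D) (hc : ¬ (p:ℤ) ∣ c) :
    ∃ x y : ℚ_[p], x^2 - (D:ℚ_[p])*y^2 = (c:ℚ_[p]) := by
  have hDz : (D : ZMod p) ≠ 0 := by rwa [Ne, ZMod.intCast_zmod_eq_zero_iff_dvd]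
  have hcz : (c : ZMod p) ≠ 0 := by rwa [Ne, ZMod.intCast_zmod_eq_zero_iff_dvd]
  have hcard : Fintype.card (ZMod p) % 2 = 1 := by
    rw [ZMod.card]
    exact Nat.odd_iff.1 ((Fact.out : p.Prime).odd_of_ne_two hp2)
  obtain ⟨A, B, hAB⟩ := FiniteField.exists_root_sum_quadratic
    (f := X^2 + C (-(c:ZMod p))) (g := C (-(D:ZMod p)) * X^2)
    (by simpa using degree_X_pow_add_C (n := 2) (by norm_num) (-(c:ZMod p)))
    (by simpa using degree_C_mul_X_pow 2 (neg_ne_zero.2 hDz))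
    hcard
  have hAB' : A^2 = (c : ZMod p) + (D:ZMod p) * B^2 := by
    simp only [eval_add, eval_pow, eval_X, eval_C, eval_mul] at hAB
    linear_combination hAB
  have hDne : (D : ℚ_[p]) ≠ 0 := by
    rw [Ne, Int.cast_eq_zero]
    rintro rfl
    exact hD (dvd_zero _)
  by_cases hA : A = 0
  · -- solve (Dy)^2 = -c*D
    have hB : (B : ZMod p) ≠ 0 := by
      intro h
      rw [hA, h] at hAB'
      simp at hAB'
      exact hcz hAB'.symm
    set a₀ : ℤ_[p] := (D:ℤ_[p]) * (B.val : ℤ_[p]) with ha₀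
    set b' : ℤ_[p] := -((c:ℤ_[p]) * (D:ℤ_[p])) with hb'
    have h1 : PadicInt.toZMod (a₀*a₀ - b') = 0 := by
      have : PadicInt.toZMod (a₀*a₀ - b')
          = (D:ZMod p)*B*((D:ZMod p)*B) + (c:ZMod p)*(D:ZMod p) := by
        simp [ha₀, hb', map_mul, map_sub, map_neg, map_intCast, map_natCast, ZMod.natCast_val,
          ZMod.cast_id]
      rw [this]
      rw [hA] at hAB'
      have h0 : (c : ZMod p) + (D:ZMod p) * B^2 = 0 := by simpa using hAB'.symm
      linear_combination (D : ZMod p) * h0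
    have h2 : PadicInt.toZMod a₀ ≠ 0 := by
      have : PadicInt.toZMod a₀ = (D:ZMod p)*B := by
        simp [ha₀, map_mul, map_intCast, map_natCast, ZMod.natCast_val, ZMod.cast_id]
      rw [this]
      exact mul_ne_zero hDz hB
    obtain ⟨u, hu⟩ := padic_sqrt hp2 h1 h2
    rw [hb'] at hu
    refine ⟨0, (u : ℚ_[p]) / (D : ℚ_[p]), ?_⟩
    have hu2 : (u:ℚ_[p]) * (u:ℚ_[p]) = -((c:ℚ_[p]) * (D:ℚ_[p])) := by
      have h3 := congrArg (fun z : ℤ_[p] => (z : ℚ_[p])) hu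
      push_cast at h3
      exact h3
    field_simp
    linear_combination -hu2
  · set a₀ : ℤ_[p] := (A.val : ℤ_[p]) with ha₀
    set b' : ℤ_[p] := (c:ℤ_[p]) + (D:ℤ_[p]) * ((B.val : ℤ_[p]) * (B.val : ℤ_[p])) with hb'
    have h1 : PadicInt.toZMod (a₀*a₀ - b') = 0 := by
      have : PadicInt.toZMod (a₀*a₀ - b') = A*A - ((c:ZMod p) + (D:ZMod p)*(B*B)) := by
        simp [ha₀, hb', map_mul, map_sub, map_add, map_intCast, map_natCast, ZMod.natCast_val,
          ZMod.cast_id]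
      rw [this]
      linear_combination hAB'
    have h2 : PadicInt.toZMod a₀ ≠ 0 := by
      have : PadicInt.toZMod a₀ = A := by
        simp [ha₀, map_natCast, ZMod.natCast_val, ZMod.cast_id]
      rw [this]
      exact hA
    obtain ⟨u, hu⟩ := padic_sqrt hp2 h1 h2
    rw [hb'] at hu
    refine ⟨(u : ℚ_[p]), ((B.val : ℤ_[p]) : ℚ_[p]), ?_⟩
    have hu2 : (u:ℚ_[p]) * (u:ℚ_[p])
        = (c:ℚ_[p]) + (D:ℚ_[p]) * (((B.val : ℤ_[p]):ℚ_[p]) * ((B.val : ℤ_[p]):ℚ_[p])) := by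
      have h3 := congrArg (fun z : ℤ_[p] => (z : ℚ_[p])) hu
      push_cast at h3
      push_cast
      exact h3
    linear_combination hu2

end padic

section locallemma

variable {p : ℕ} [Fact p.Prime] {C₁ C₂ : ℚ_[p]}

theorem local_dvd (hp2 : p ≠ 2)
    (hdiv : ∀ x : ℍ[ℚ_[p],C₁,C₂], x ≠ 0 → IsUnit x)
    (u η : ℍ[ℚ_[p],C₁,C₂]) (Δ m : ℤ)
    (hΔp : ¬ (p:ℤ) ∣ Δ)
    (hu2 : u * u = (Δ:ℚ_[p]) • (1 : ℍ[ℚ_[p],C₁,C₂]))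
    (hus : star u = -u)
    (hηs : star η = -η)
    (hη0 : η ≠ 0)
    (hanti : η * u = -(u * η))
    (hnη : nrdF η = (m : ℚ_[p])) :
    (p:ℤ) ∣ m := by
  by_contra hpm
  have hΔ0 : Δ ≠ 0 := by rintro rfl; exact hΔp (dvd_zero _)
  obtain ⟨x, y, hxy⟩ := padic_norm_form_solves hp2 Δ (-m) hΔp (by simpa using hpm)
  set w : ℍ[ℚ_[p],C₁,C₂] := x • 1 + y • u + η with hw
  have hwstar : star w = x • 1 - y • u - η := by
    rw [hw]
    simp only [star_add, QuaternionAlgebra.star_smul, star_one, hus, hηs, smul_neg]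
    abel
  have hcross : u * η + η * u = 0 := by rw [hanti, add_neg_cancel]
  have hηsq : η * η = -((m:ℚ_[p]) • (1:ℍ[ℚ_[p],C₁,C₂])) := by
    have h := mul_star_self η
    rw [hηs, mul_neg, hnη] at h
    rw [← h, neg_neg]
  have expand : w * star w
      = (x*x)•(1:ℍ[ℚ_[p],C₁,C₂]) - (y*y)•(u*u) - η*η - y•(u*η + η*u) := by
    rw [hw, hwstar]
    simp only [mul_add, add_mul, mul_sub, sub_mul, smul_mul_assoc, mul_smul_comm, smul_smul,
      one_mul, mul_one, smul_add, smul_sub]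
    module
  have h0 : (x*x) - (y*y)*(Δ:ℚ_[p]) + (m:ℚ_[p]) = 0 := by
    push_cast at hxy ⊢
    linear_combination hxy
  have hkey : w * star w = 0 := by
    rw [expand, hcross, hηsq, hu2, smul_zero, sub_zero, sub_neg_eq_add, smul_smul]
    have : (x*x)•(1:ℍ[ℚ_[p],C₁,C₂]) - ((y*y)*(Δ:ℚ_[p]))•(1:ℍ[ℚ_[p],C₁,C₂])
        + (m:ℚ_[p])•(1:ℍ[ℚ_[p],C₁,C₂]) = ((x*x) - (y*y)*(Δ:ℚ_[p]) + (m:ℚ_[p])) • 1 := by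
      module
    rw [this, h0, zero_smul]
  have hw0 : w = 0 := by
    by_contra hw0
    have hsw : star w = 0 := eq_zero_of_mul_eq_zero_left hdiv hkey hw0
    exact hw0 (by simpa using congrArg star hsw)
  have hweq : η = -(x • 1 + y • u) := by
    have h5 : x • 1 + y • u + η = 0 := by rw [← hw, hw0]
    rwa [add_comm, add_eq_zero_iff_eq_neg] at h5
  have hcomm : u * η = η * u := by
    rw [hweq]
    simp only [mul_neg, neg_mul, mul_add, add_mul, mul_smul_comm, smul_mul_assoc, mul_one, one_mul]
  have huη : u * η = 0 := by
    have h2 : (2:ℚ_[p]) • (u * η) = 0 := by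
      rw [two_smul]
      nth_rewrite 1 [hcomm]
      rw [hanti, neg_add_cancel]
    have := smul_eq_zero.1 h2
    rcases this with h | h
    · norm_num at h
    · exact h
  have hu0 : u ≠ 0 := by
    intro h
    rw [h, mul_zero] at hu2
    have := congrArg QuaternionAlgebra.re hu2.symm
    simp at this
    exact hΔ0 (by exact_mod_cast this)
  exact hη0 (eq_zero_of_mul_eq_zero_left hdiv huη hu0)

end locallemma

section integrality

open Polynomial

variable {c₁ c₂ : ℚ}

theorem exists_int_trd_nrd {O : Subring ℍ[ℚ,c₁,c₂]}
    (e : Module.Basis (Fin 4) ℚ ℍ[ℚ,c₁,c₂])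
    (he : ∀ x : ℍ[ℚ,c₁,c₂], x ∈ O ↔ ∃ c : Fin 4 → ℤ, x = ∑ i, (c i : ℚ) • e i)
    {x : ℍ[ℚ,c₁,c₂]} (hx : x ∈ O) :
    ∃ T N : ℤ, 2 * x.re = (T:ℚ) ∧ nrdF x = (N:ℚ) := by
  classical
  set S : Subalgebra ℤ ℍ[ℚ,c₁,c₂] := subalgebraOfSubring O with hS
  have hsub : Subalgebra.toSubmodule S = Submodule.span ℤ (Set.range e) := by
    ext y
    rw [Subalgebra.mem_toSubmodule]
    have h1 : y ∈ S ↔ y ∈ O := Iff.rfl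
    rw [h1, he y, Submodule.mem_span_range_iff_exists_fun]
    constructor
    · rintro ⟨c, rfl⟩
      exact ⟨c, by simp [Int.cast_smul_eq_zsmul]⟩
    · rintro ⟨c, rfl⟩
      exact ⟨c, by simp [Int.cast_smul_eq_zsmul]⟩
  have hfg : (Subalgebra.toSubmodule S).FG := by
    rw [hsub]
    exact Submodule.fg_span (Set.finite_range e)
  have hint : IsIntegral ℤ x := IsIntegral.of_mem_of_fg S hfg x hx
  by_cases him : x.imI = 0 ∧ x.imJ = 0 ∧ x.imK = 0
  · have hxeq : x = algebraMap ℚ ℍ[ℚ,c₁,c₂] x.re := by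
      rw [QuaternionAlgebra.algebraMap_eq]
      ext <;> simp [him.1, him.2.1, him.2.2]
    rw [hxeq] at hint
    have hre : IsIntegral ℤ x.re :=
      (isIntegral_algebraMap_iff (QuaternionAlgebra.algebraMap_injective)).1 hint
    obtain ⟨r, hr⟩ := IsIntegrallyClosed.isIntegral_iff.1 hre
    have hr' : (r : ℚ) = x.re := hr
    refine ⟨2*r, r*r, by push_cast [← hr']; ring, ?_⟩
    rw [nrdF_def, him.1, him.2.1, him.2.2, ← hr']
    push_cast
    ring
  · set q' : ℚ[X] := X^2 + (C (-(2*x.re)) * X + C (nrdF x)) with hq'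
    have hlin : (C (-(2*x.re)) * X + C (nrdF x)).degree < ((2:ℕ) : WithBot ℕ) :=
      lt_of_le_of_lt degree_linear_le (by decide)
    have hq'monic : q'.Monic := monic_X_pow_add hlin
    have haeval : Polynomial.aeval x q' = 0 := by
      rw [hq']
      simp only [map_add, map_mul, map_pow, aeval_X, aeval_C]
      rw [Algebra.algebraMap_eq_smul_one, Algebra.algebraMap_eq_smul_one, sq, sq_self]
      rw [smul_mul_assoc, one_mul]
      module
    have hQ : IsIntegral ℚ x := hint.tower_top
    have hdvd := minpoly.dvd ℚ x haeval
    have hq'ne : q' ≠ 0 := hq'monic.ne_zero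
    have hq'deg : q'.natDegree = 2 := by
      have hd : q'.degree = 2 := by
        rw [hq']
        rw [degree_add_eq_left_of_degree_lt]
        · exact degree_X_pow 2
        · rw [degree_X_pow]
          exact hlin
      exact natDegree_eq_of_degree_eq_some hd
    have hminmonic := minpoly.monic hQ
    have hd1 : 0 < (minpoly ℚ x).natDegree := minpoly.natDegree_pos hQ
    have hd2 : (minpoly ℚ x).natDegree ≤ 2 := by
      have := natDegree_le_of_dvd hdvd hq'ne
      rwa [hq'deg] at this
    have hminq : minpoly ℚ x = q' := by
      rcases hdvd with ⟨r, hr⟩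
      have hrne : r ≠ 0 := by
        rintro rfl
        rw [mul_zero] at hr
        exact hq'ne hr
      interval_cases hdm : (minpoly ℚ x).natDegree
      · -- degree 1 : x would be scalar
        exfalso
        have heq1 := hminmonic.eq_X_add_C hdm
        have := minpoly.aeval ℚ x
        rw [heq1] at this
        simp only [map_add, aeval_X, aeval_C] at this
        have hxs : x = -(algebraMap ℚ ℍ[ℚ,c₁,c₂] ((minpoly ℚ x).coeff 0)) :=
          eq_neg_of_add_eq_zero_left this
        apply him
        rw [QuaternionAlgebra.algebraMap_eq] at hxs
        exact ⟨by rw [hxs]; simp, by rw [hxs]; simp, by rw [hxs]; simp⟩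
      · -- degree 2
        have hdegr : r.natDegree = 0 := by
          have hmul := natDegree_mul (minpoly.ne_zero hQ) hrne
          rw [← hr, hq'deg, hdm] at hmul
          omega
        have hlc : r.leadingCoeff = 1 := by
          have := leadingCoeff_mul (minpoly ℚ x) r
          rw [← hr, hq'monic.leadingCoeff, hminmonic.leadingCoeff, one_mul] at this
          exact this.symm
        have hr1 : r = 1 := by
          have hrc := eq_C_of_natDegree_eq_zero hdegr
          rw [hrc] at hlc ⊢
          rw [leadingCoeff_C] at hlc
          rw [hlc, map_one]
        rw [hr, hr1, mul_one]
    obtain ⟨P, hPm, hPz⟩ := hint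
    have hdvdP : minpoly ℚ x ∣ P.map (algebraMap ℤ ℚ) := by
      apply minpoly.dvd
      rw [aeval_map_algebraMap]
      rw [aeval_def]
      exact hPz
    obtain ⟨g', hg'⟩ := IsIntegrallyClosed.eq_map_mul_C_of_dvd (K := ℚ) hPm hdvdP
    rw [hminmonic.leadingCoeff, map_one, mul_one] at hg'
    have hcoeffs := hg'
    rw [hminq] at hcoeffs
    have hc1 : (g'.coeff 1 : ℚ) = -(2*x.re) := by
      have := congrArg (fun P => P.coeff 1) hcoeffs
      simpa [coeff_map, hq', coeff_X_pow] using this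
    have hc0 : (g'.coeff 0 : ℚ) = nrdF x := by
      have := congrArg (fun P => P.coeff 0) hcoeffs
      simpa [coeff_map, hq', coeff_X_pow] using this
    exact ⟨-(g'.coeff 1), g'.coeff 0, by push_cast; linarith [hc1], hc0.symm⟩

end integrality

section misc

theorem re_mul_comm {F : Type*} [Field F] {a b : F} (x y : ℍ[F,a,b]) :
    (x*y).re = (y*x).re := by
  simp only [QuaternionAlgebra.re_mul]
  ring

theorem sum_identity {c₁ c₂ : ℚ} (α β : ℍ[ℚ,c₁,c₂]) (t n : ℚ)
    (h1 : 2*α.re = t) (h2 : nrdF α = n) (h3 : 2*β.re = t) (h4 : nrdF β = n) :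
    nrdF (α - β) + nrdF (α + β - t•1) = 4*n - t^2 := by
  rw [nrdF_def] at h2 h4
  simp only [nrdF_def, QuaternionAlgebra.re_sub, QuaternionAlgebra.imI_sub,
    QuaternionAlgebra.imJ_sub, QuaternionAlgebra.imK_sub, QuaternionAlgebra.re_add,
    QuaternionAlgebra.imI_add, QuaternionAlgebra.imJ_add, QuaternionAlgebra.imK_add,
    QuaternionAlgebra.re_smul, QuaternionAlgebra.imI_smul, QuaternionAlgebra.imJ_smul,
    QuaternionAlgebra.imK_smul, QuaternionAlgebra.re_one, QuaternionAlgebra.imI_one,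
    QuaternionAlgebra.imJ_one, QuaternionAlgebra.imK_one, smul_eq_mul]
  linear_combination 2*h2 + 2*h4 + (-t)*h1 + (-t)*h3

theorem commutant_lemma {c₁ c₂ : ℚ} (hc₁ : c₁ ≠ 0) (hc₂ : c₂ ≠ 0)
    {x y : ℍ[ℚ,c₁,c₂]} (him : ¬(x.imI = 0 ∧ x.imJ = 0 ∧ x.imK = 0))
    (h : x * y = y * x) : ∃ u v : ℚ, y = u • 1 + v • x := by
  have h1 := congrArg QuaternionAlgebra.imI h
  have h2 := congrArg QuaternionAlgebra.imJ h
  have h3 := congrArg QuaternionAlgebra.imK h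
  simp only [QuaternionAlgebra.imI_mul, QuaternionAlgebra.imJ_mul,
    QuaternionAlgebra.imK_mul] at h1 h2 h3
  have e1 : x.imJ * y.imK = x.imK * y.imJ := by
    have e1' : (2*c₂) * (x.imJ * y.imK - x.imK * y.imJ) = 0 := by linear_combination -h1
    have h2c : (2*c₂ : ℚ) ≠ 0 := by simp [hc₂]
    have := (mul_eq_zero.1 e1').resolve_left h2c
    linarith [this]
  have e2 : x.imI * y.imK = x.imK * y.imI := by
    have e2' : (2*c₁) * (x.imI * y.imK - x.imK * y.imI) = 0 := by linear_combination h2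
    have h2c : (2*c₁ : ℚ) ≠ 0 := by simp [hc₁]
    have := (mul_eq_zero.1 e2').resolve_left h2c
    linarith [this]
  have e3 : x.imI * y.imJ = x.imJ * y.imI := by
    have e3' : (2:ℚ) * (x.imI * y.imJ - x.imJ * y.imI) = 0 := by linear_combination h3
    have := (mul_eq_zero.1 e3').resolve_left (by norm_num)
    linarith [this]
  by_cases hI : x.imI = 0
  · by_cases hJ : x.imJ = 0
    · have hK : x.imK ≠ 0 := fun hk => him ⟨hI, hJ, hk⟩
      have hy1 : y.imI = 0 := by
        have := e2
        rw [hI] at this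
        simpa [hK] using this.symm
      have hy2 : y.imJ = 0 := by
        have := e1
        rw [hJ] at this
        simpa [hK] using this.symm
      refine ⟨y.re - (y.imK / x.imK) * x.re, y.imK / x.imK, ?_⟩
      ext <;> simp only [QuaternionAlgebra.re_add, QuaternionAlgebra.imI_add,
        QuaternionAlgebra.imJ_add, QuaternionAlgebra.imK_add, QuaternionAlgebra.re_smul,
        QuaternionAlgebra.imI_smul, QuaternionAlgebra.imJ_smul, QuaternionAlgebra.imK_smul,
        QuaternionAlgebra.re_one, QuaternionAlgebra.imI_one, QuaternionAlgebra.imJ_one,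
        QuaternionAlgebra.imK_one, smul_eq_mul]
      · field_simp
        ring
      · simp [hy1, hI]
      · simp [hy2, hJ]
      · rw [mul_zero, zero_add, div_mul_eq_mul_div, eq_div_iff hK]
    · have hJ' : x.imJ ≠ 0 := hJ
      have hy1 : y.imI = 0 := by
        have := e3
        rw [hI] at this
        simpa [hJ'] using this.symm
      refine ⟨y.re - (y.imJ / x.imJ) * x.re, y.imJ / x.imJ, ?_⟩
      ext <;> simp only [QuaternionAlgebra.re_add, QuaternionAlgebra.imI_add,
        QuaternionAlgebra.imJ_add, QuaternionAlgebra.imK_add, QuaternionAlgebra.re_smul,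
        QuaternionAlgebra.imI_smul, QuaternionAlgebra.imJ_smul, QuaternionAlgebra.imK_smul,
        QuaternionAlgebra.re_one, QuaternionAlgebra.imI_one, QuaternionAlgebra.imJ_one,
        QuaternionAlgebra.imK_one, smul_eq_mul]
      · field_simp
        ring
      · simp [hy1, hI]
      · rw [mul_zero, zero_add, div_mul_eq_mul_div, eq_div_iff hJ']
      · rw [mul_zero, zero_add, div_mul_eq_mul_div, eq_div_iff hJ']
        linear_combination e1
  · have hI' : x.imI ≠ 0 := hI
    refine ⟨y.re - (y.imI / x.imI) * x.re, y.imI / x.imI, ?_⟩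
    ext <;> simp only [QuaternionAlgebra.re_add, QuaternionAlgebra.imI_add,
      QuaternionAlgebra.imJ_add, QuaternionAlgebra.imK_add, QuaternionAlgebra.re_smul,
      QuaternionAlgebra.imI_smul, QuaternionAlgebra.imJ_smul, QuaternionAlgebra.imK_smul,
      QuaternionAlgebra.re_one, QuaternionAlgebra.imI_one, QuaternionAlgebra.imJ_one,
      QuaternionAlgebra.imK_one, smul_eq_mul]
    · field_simp
      ring
    · rw [mul_zero, zero_add, div_mul_eq_mul_div, eq_div_iff hI']
    · rw [mul_zero, zero_add, div_mul_eq_mul_div, eq_div_iff hI']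
      linear_combination e3
    · rw [mul_zero, zero_add, div_mul_eq_mul_div, eq_div_iff hI']
      linear_combination e2

end misc

end HorAux


/-- Let `𝔒 = ℤ[ω]` be an imaginary quadratic order of discriminant `Δ` with
`|Δ| < p`, let `ι` be a primitive `𝔒`-orientation of the endomorphism ring of a
supersingular elliptic curve — a maximal order `𝒪 ⊂ B_{p,∞}` under the Deuring
correspondence — given by `α = ι(ω) ∈ 𝒪`, and let `ψ ∈ 𝒪` be a horizontal
endomorphism (i.e. the pushforward `ψ_*(ι)`, given by
`ω ↦ (1/deg ψ)·ψ·α·ψ̄`, is again a primitive `𝔒`-orientation) of degree `deg ψ = nrd ψ`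
coprime to `p`.  Then there exists an element of `𝔒` mapping to `ψ`, i.e.
`ψ ∈ ℤ[α] = ι(𝔒)`. -/

theorem horizontal_endomorphism_in_image (p : ℕ) [Fact p.Prime]
    (c₁ c₂ : ℚ) (hB : IsBpInfty p c₁ c₂)
    (O : Subring ℍ[ℚ, c₁, c₂]) (hO : IsMaximalOrder O)
    (α : ℍ[ℚ, c₁, c₂]) (t n : ℤ)
    (ht : trd α = (t : ℚ)) (hn : nrd α = (n : ℚ))
    (Δ : ℤ) (hΔ : Δ = t ^ 2 - 4 * n) (hneg : Δ < 0) (hsmall : |Δ| < (p : ℤ))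
    (hprim : IsPrimitiveEmbedding O α)
    (ψ : ℍ[ℚ, c₁, c₂]) (hψ : ψ ∈ O)
    (m : ℤ) (hm : nrd ψ = (m : ℚ)) (hmpos : 0 < m) (hmp : ¬ (p : ℤ) ∣ m)
    (hhor : IsPrimitiveEmbedding O ((nrd ψ)⁻¹ • (ψ * α * star ψ))) :
    ∃ u v : ℤ, ψ = (u : ℚ) • (1 : ℍ[ℚ, c₁, c₂]) + (v : ℚ) • α := by
  classical
  obtain ⟨hdivR, hdivP, -⟩ := hB
  have hc₁ : c₁ < 0 := by exact_mod_cast HorAux.c_neg_left hdivR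
  have hc₂ : c₂ < 0 := by exact_mod_cast HorAux.c_neg_right hdivR
  have hpos : ∀ x : ℍ[ℚ,c₁,c₂], x ≠ 0 → 0 < HorAux.nrdF x := fun x hx =>
    HorAux.nrdF_pos hc₁ hc₂ hx
  have hmQ : (m:ℚ) ≠ 0 := Int.cast_ne_zero.2 hmpos.ne'
  have hψ0 : ψ ≠ 0 := by
    rintro rfl
    rw [show nrd (0:ℍ[ℚ,c₁,c₂]) = 0 from HorAux.nrdF_zero] at hm
    exact hmQ hm.symm
  set β : ℍ[ℚ,c₁,c₂] := (nrd ψ)⁻¹ • (ψ * α * star ψ) with hβ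
  have hβO : β ∈ O := hhor.1
  have hmβ : (m:ℚ) • β = ψ * α * star ψ := by
    rw [hβ, hm, smul_smul, mul_inv_cancel₀ hmQ, one_smul]
  have hψstar : star ψ * ψ = (m:ℚ) • 1 := by
    rw [← hm]; exact HorAux.star_mul_self ψ
  have hψstar' : ψ * star ψ = (m:ℚ) • 1 := by
    rw [← hm]; exact HorAux.mul_star_self ψ
  have ht' : 2 * α.re = (t:ℚ) := ht
  have hn' : HorAux.nrdF α = (n:ℚ) := hn
  have hβre : 2 * β.re = (t:ℚ) := by
    have h5 : (ψ * α * star ψ).re = (m:ℚ) * α.re := by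
      rw [HorAux.re_mul_comm (ψ*α) (star ψ), ← mul_assoc, hψstar]
      simp [HorAux.re_mul_comm]
    have h6 : β.re = (m:ℚ)⁻¹ * ((m:ℚ) * α.re) := by
      rw [hβ, hm]
      simp [h5]
    have h6' : β.re = α.re := by
      rw [h6, ← mul_assoc, inv_mul_cancel₀ hmQ, one_mul]
    rw [h6']
    exact ht'
  have hβn : HorAux.nrdF β = (n:ℚ) := by
    rw [hβ, hm, HorAux.nrdF_smul, HorAux.nrdF_mul, HorAux.nrdF_mul, HorAux.nrdF_star,
      show HorAux.nrdF ψ = (m:ℚ) from hm, hn']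
    field_simp
  have hsqα : α * α = (t:ℚ) • α - (n:ℚ) • 1 := by
    have h7 := HorAux.sq_self α
    rw [ht', hn'] at h7
    exact h7
  have hsqβ : β * β = (t:ℚ) • β - (n:ℚ) • 1 := by
    have h7 := HorAux.sq_self β
    rw [hβre, hβn] at h7
    exact h7
  have hψα : ψ * α = β * ψ := by
    have h6 : ψ * α * star ψ * ψ = (m:ℚ) • (ψ * α) := by
      rw [mul_assoc (ψ*α), hψstar, mul_smul_comm, mul_one]
    have h7 : ψ * α * star ψ * ψ = (m:ℚ) • (β * ψ) := by
      rw [← hmβ, smul_mul_assoc]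
    exact smul_right_injective _ hmQ (h6.symm.trans h7)
  have hfact : α*β - β*α = (α - β) * (α + β - (t:ℚ)•1) := by
    have hexp : (α - β) * (α + β - (t:ℚ)•1)
        = α*α - β*β + (α*β - β*α) - ((t:ℚ)•α - (t:ℚ)•β) := by
      simp only [mul_add, add_mul, mul_sub, sub_mul, mul_smul_comm, smul_mul_assoc,
        mul_one, one_mul]
      module
    rw [hexp, hsqα, hsqβ]
    module
  -- basic arithmetic facts about p and Δ
  have habs : -Δ < (p:ℤ) := by rwa [abs_of_neg hneg] at hsmall
  have hp2 : p ≠ 2 := by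
    have h4 : Δ % 4 = 0 ∨ Δ % 4 = 1 := by
      rcases Int.even_or_odd t with ⟨k, hk⟩ | ⟨k, hk⟩
      · left
        have : Δ = 4*(k*k - n) := by rw [hΔ, hk]; ring
        omega
      · right
        have : Δ = 4*(k*k + k - n) + 1 := by rw [hΔ, hk]; ring
        omega
    intro hp2'
    have : ((p:ℤ)) = 2 := by rw [hp2']; norm_num
    omega
  have hΔne : ¬ (p:ℤ) ∣ Δ := by
    intro hdvd
    have h5 : (p:ℤ) ∣ -Δ := dvd_neg.2 hdvd
    have := Int.le_of_dvd (by omega) h5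
    omega
  -- the pure quaternion u0 = 2α - t
  set u0 : ℍ[ℚ,c₁,c₂] := (2:ℚ)•α - (t:ℚ)•1 with hu0
  have hu0sq : u0 * u0 = (Δ:ℚ) • 1 := by
    have hcalc : u0 * u0 = (4:ℚ)•(α*α) - (4*(t:ℚ))•α + ((t:ℚ)*(t:ℚ))•1 := by
      rw [hu0]
      simp only [mul_sub, sub_mul, smul_mul_assoc, mul_smul_comm, smul_smul, mul_one, one_mul]
      module
    rw [hcalc, hsqα]
    have h8 : (4:ℚ)•((t:ℚ)•α - (n:ℚ)•1) - (4*(t:ℚ))•α + ((t:ℚ)*(t:ℚ))•1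
        = ((t:ℚ)*(t:ℚ) - 4*(n:ℚ))•(1:ℍ[ℚ,c₁,c₂]) := by module
    rw [h8]
    congr 1
    rw [hΔ]
    push_cast
    ring
  have hΔQ : (Δ:ℚ) ≠ 0 := Int.cast_ne_zero.2 hneg.ne
  have hu00 : u0 ≠ 0 := by
    intro h
    rw [h, mul_zero] at hu0sq
    have h9 := congrArg QuaternionAlgebra.re hu0sq
    simp at h9
    exact hΔQ h9.symm
  have hu0re : u0.re = 0 := by
    rw [hu0]
    simp only [QuaternionAlgebra.re_sub, QuaternionAlgebra.re_smul, QuaternionAlgebra.re_one,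
      smul_eq_mul, mul_one]
    linarith [ht']
  have hu0star : star u0 = -u0 := QuaternionAlgebra.star_eq_neg.2 hu0re
  -- base change to ℚ_[p]
  set f : ℚ →+* ℚ_[p] := Rat.castHom ℚ_[p] with hf
  have hu2' : HorAux.qmap f u0 * HorAux.qmap f u0
      = ((Δ:ℚ_[p])) • (1 : ℍ[ℚ_[p], f c₁, f c₂]) := by
    rw [← map_mul, hu0sq, HorAux.qmap_smul, map_one, map_intCast]
  have hus' : star (HorAux.qmap f u0) = -(HorAux.qmap f u0) := by
    rw [← HorAux.qmap_star, hu0star, map_neg]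
  by_cases hz : α * β = β * α
  · by_cases hαβ : α = β
    · -- ψ commutes with α
      have hcomm : α * ψ = ψ * α := by rw [hψα, ← hαβ]
      have him : ¬(α.imI = 0 ∧ α.imJ = 0 ∧ α.imK = 0) := by
        rintro ⟨hi1, hi2, hi3⟩
        have hnα : (n:ℚ) = α.re^2 := by
          rw [← hn', HorAux.nrdF_def, hi1, hi2, hi3]
          ring
        have hΔ0 : (Δ:ℚ) = 0 := by
          rw [hΔ]
          push_cast
          rw [hnα, ← ht']
          ring
        exact hΔQ hΔ0
      obtain ⟨u', v', huv⟩ := HorAux.commutant_lemma (ne_of_lt hc₁) (ne_of_lt hc₂) him hcomm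
      exact hprim.2 ψ hψ ⟨u', v', huv⟩
    · -- conjugate orientation case: ψ anticommutes with u0, contradiction with p ∤ m
      exfalso
      have hzero : (α - β) * (α + β - (t:ℚ)•1) = 0 := by rw [← hfact, hz, sub_self]
      have hA0 : α - β ≠ 0 := sub_ne_zero.2 hαβ
      have hB0 : α + β - (t:ℚ)•1 = 0 := by
        by_contra hB0
        have h8 : HorAux.nrdF ((α-β) * (α+β-(t:ℚ)•1)) = 0 := by
          rw [hzero]
          exact HorAux.nrdF_zero
        rw [HorAux.nrdF_mul] at h8
        have h9 := mul_pos (hpos _ hA0) (hpos _ hB0)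
        rw [h8] at h9
        exact lt_irrefl _ h9
      have hβval : β = (t:ℚ)•1 - α := by
        have h7 : α + β = (t:ℚ)•1 := by
          have := sub_eq_zero.1 hB0
          exact this
        exact eq_sub_of_add_eq' h7
      have hψαanti : ψ * α = ((t:ℚ)•1 - α) * ψ := by rw [hψα, hβval]
      have hanti : ψ * u0 = -(u0 * ψ) := by
        rw [hu0]
        simp only [mul_sub, sub_mul, smul_mul_assoc, mul_smul_comm, mul_one, one_mul, neg_sub]
        rw [hψαanti]
        simp only [sub_mul, smul_mul_assoc, one_mul]
        module
      -- ψ is pure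
      have h8 : star ψ * u0 = -(u0 * star ψ) := by
        have h8a := congrArg star hanti
        rw [star_mul, star_neg, star_mul, hu0star] at h8a
        simp only [neg_mul, mul_neg, neg_neg] at h8a
        exact h8a.symm
      have h9 : ((2*ψ.re : ℚ)) • u0 = -(((2*ψ.re : ℚ)) • u0) := by
        have h10 : (ψ + star ψ) * u0 = -(u0 * (ψ + star ψ)) := by
          rw [add_mul, hanti, h8, mul_add, neg_add]
        rw [QuaternionAlgebra.self_add_star'] at h10
        rw [QuaternionAlgebra.coe_mul_eq_smul, QuaternionAlgebra.mul_coe_eq_smul] at h10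
        rw [zero_mul, add_zero] at h10
        exact h10
      have hψre : ψ.re = 0 := by
        have h9' : ((2*ψ.re : ℚ)) • u0 + ((2*ψ.re : ℚ)) • u0 = 0 :=
          eq_neg_iff_add_eq_zero.1 h9
        rw [← two_smul ℚ, smul_smul] at h9'
        rcases smul_eq_zero.1 h9' with h | h
        · have : (2:ℚ) * (2*ψ.re) = 0 := h
          linarith [this]
        · exact absurd h hu00
      have hψpure : star ψ = -ψ := QuaternionAlgebra.star_eq_neg.2 hψre
      apply hmp
      refine HorAux.local_dvd hp2 hdivP (HorAux.qmap f u0) (HorAux.qmap f ψ) Δ m hΔne hu2'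
        hus' ?_ ?_ ?_ ?_
      · show star (HorAux.qmap f ψ) = -(HorAux.qmap f ψ)
        rw [← HorAux.qmap_star, hψpure, map_neg]
      · exact HorAux.qmap_ne_zero f hψ0
      · show HorAux.qmap f ψ * HorAux.qmap f u0 = -(HorAux.qmap f u0 * HorAux.qmap f ψ)
        rw [← map_mul (HorAux.qmap f) ψ u0, hanti, map_neg, map_mul]
      · show HorAux.nrdF (HorAux.qmap f ψ) = ((m:ℤ):ℚ_[p])
        rw [HorAux.nrdF_qmap, show HorAux.nrdF ψ = ((m:ℤ):ℚ) from hm]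
        exact map_intCast f m
  · -- non-commuting case: impossible
    exfalso
    set z : ℍ[ℚ,c₁,c₂] := α*β - β*α with hzdef
    have hzne : z ≠ 0 := sub_ne_zero.2 hz
    have hA0 : α - β ≠ 0 := by
      intro h
      apply hzne
      rw [hfact, h, zero_mul]
    have hB0 : α + β - (t:ℚ)•1 ≠ 0 := by
      intro h
      apply hzne
      rw [hfact, h, mul_zero]
    have htO : ((t:ℚ)•1 : ℍ[ℚ,c₁,c₂]) ∈ O := by
      have h5 : ((t:ℚ)•1 : ℍ[ℚ,c₁,c₂]) = ((t:ℤ) : ℍ[ℚ,c₁,c₂]) := by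
        ext <;> simp
      rw [h5]
      exact intCast_mem O t
    have hAO : α - β ∈ O := sub_mem hprim.1 hβO
    have hBO : α + β - (t:ℚ)•1 ∈ O := sub_mem (add_mem hprim.1 hβO) htO
    obtain ⟨e, he⟩ := hO.1
    obtain ⟨T1, d₁, -, hd₁⟩ := HorAux.exists_int_trd_nrd e he hAO
    obtain ⟨T2, d₂, -, hd₂⟩ := HorAux.exists_int_trd_nrd e he hBO
    have hd₁pos : 0 < d₁ := by
      have := hpos _ hA0
      rw [hd₁] at this
      exact_mod_cast this
    have hd₂pos : 0 < d₂ := by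
      have := hpos _ hB0
      rw [hd₂] at this
      exact_mod_cast this
    have hsum : d₁ + d₂ = -Δ := by
      have h5 := HorAux.sum_identity α β (t:ℚ) (n:ℚ) ht' hn' hβre hβn
      rw [hd₁, hd₂] at h5
      have h6 : ((d₁ + d₂ : ℤ) : ℚ) = ((-Δ : ℤ) : ℚ) := by
        push_cast
        rw [hΔ]
        push_cast
        linarith [h5]
      exact_mod_cast h6
    have hnz : HorAux.nrdF z = ((d₁*d₂ : ℤ):ℚ) := by
      rw [hfact, HorAux.nrdF_mul, hd₁, hd₂]
      push_cast
      ring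
    have hzre : z.re = 0 := by
      rw [hzdef, QuaternionAlgebra.re_sub, HorAux.re_mul_comm, sub_self]
    have hzstar : star z = -z := QuaternionAlgebra.star_eq_neg.2 hzre
    have h11 : z*α + α*z = (t:ℚ)•z := by
      have e11 : z*α + α*z = (α*α)*β - β*(α*α) := by
        rw [hzdef]
        noncomm_ring
      rw [e11, hsqα, hzdef]
      simp only [sub_mul, mul_sub, smul_mul_assoc, mul_smul_comm, one_mul, mul_one, smul_sub]
      module
    have hzanti : z * u0 = -(u0 * z) := by
      have h12 : z*u0 + u0*z = (2:ℚ)•(z*α + α*z) - (2*(t:ℚ))•z := by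
        rw [hu0]
        simp only [mul_sub, sub_mul, smul_mul_assoc, mul_smul_comm, mul_one, one_mul, smul_add]
        module
      have h13 : z*u0 + u0*z = 0 := by
        rw [h12, h11]
        module
      exact eq_neg_of_add_eq_zero_left h13
    have hdvdprod : (p:ℤ) ∣ d₁ * d₂ := by
      refine HorAux.local_dvd hp2 hdivP (HorAux.qmap f u0) (HorAux.qmap f z) Δ (d₁*d₂) hΔne
        hu2' hus' ?_ ?_ ?_ ?_
      · show star (HorAux.qmap f z) = -(HorAux.qmap f z)
        rw [← HorAux.qmap_star, hzstar, map_neg]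
      · exact HorAux.qmap_ne_zero f hzne
      · show HorAux.qmap f z * HorAux.qmap f u0 = -(HorAux.qmap f u0 * HorAux.qmap f z)
        rw [← map_mul (HorAux.qmap f) z u0, hzanti, map_neg, map_mul]
      · show HorAux.nrdF (HorAux.qmap f z) = ((d₁*d₂:ℤ):ℚ_[p])
        rw [HorAux.nrdF_qmap, hnz]
        exact map_intCast f (d₁*d₂)
    have hpZ : Prime ((p:ℕ):ℤ) := Int.prime_iff_natAbs_prime.2 (by simpa using (Fact.out : p.Prime))
    rcases hpZ.2.2 d₁ d₂ hdvdprod with h | h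
    · have := Int.le_of_dvd hd₁pos h
      omega
    · have := Int.le_of_dvd hd₂pos h
      omega
end
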